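/- arXiv:0802.4459 — 5 statements merged into one kernel-verified Lean document; each statement's English description precedes it below -/
import Mathlib

section
/- The jump transformation R preserves the probability measure μ: for every Borel set A ⊆ (0,1]∖ℚ, μ(R⁻¹A) = μ(A). -/
open MeasureTheory Filter

noncomputable section

/-- The ECF digit `k` of a point `x ∈ (0,1]`: `x ∈ B(k,ξ)`. -/
def ecfK (x : ℝ) : ℕ := (⌊1/x⌋ + 1).toNat / 2

/-- The ECF digit `ξ` of a point `x ∈ (0,1]`. -/
def ecfXi (x : ℝ) : ℤ := if ⌊1/x⌋ % 2 = 0 then 1 else -1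

/-- The ECF Gauss-like map `T(x) = ξ (1/x - 2k)` for `x ∈ B(k,ξ)`. -/
def ecfT (x : ℝ) : ℝ := (ecfXi x : ℝ) * (1/x - 2 * (ecfK x : ℝ))

/-- The domain: irrational points of `(0,1]`. -/
def ECFdom : Set ℝ := {x | x ∈ Set.Ioc (0:ℝ) 1 ∧ Irrational x}

/-- The `n`-th ECF digit `k_n(x)` (for `n ≥ 1`). -/
def ecfDigK (x : ℝ) (n : ℕ) : ℕ := ecfK (ecfT^[n-1] x)

/-- The `n`-th ECF digit `ξ_n(x)` (for `n ≥ 1`), with the convention `ξ_0 = 1`. -/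
def ecfDigXi (x : ℝ) (n : ℕ) : ℤ := if n = 0 then 1 else ecfXi (ecfT^[n-1] x)

/-- Numerators of continued fractions with even partial quotients built from digit
sequences `(k_n)_{n≥1}`, `(ξ_n)_{n≥0}`:
`p_n = 2 k_n p_{n-1} + ξ_{n-1} p_{n-2}`, `p_0 = 0`, `p_{-1} = 1`. -/
def cfP (k : ℕ → ℕ) (ξ : ℕ → ℤ) : ℕ → ℤ
  | 0 => 0
  | 1 => ξ 0
  | (n+2) => 2 * (k (n+2) : ℤ) * cfP k ξ (n+1) + ξ (n+1) * cfP k ξ n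

/-- Denominators: `q_n = 2 k_n q_{n-1} + ξ_{n-1} q_{n-2}`, `q_0 = 1`, `q_{-1} = 0`. -/
def cfQ (k : ℕ → ℕ) (ξ : ℕ → ℤ) : ℕ → ℤ
  | 0 => 1
  | 1 => 2 * (k 1 : ℤ)
  | (n+2) => 2 * (k (n+2) : ℤ) * cfQ k ξ (n+1) + ξ (n+1) * cfQ k ξ n

/-- The ECF convergent numerators `p_n(x)`. -/
def ecfP (x : ℝ) : ℕ → ℤ := cfP (ecfDigK x) (ecfDigXi x)

/-- The ECF convergent denominators `q_n(x)`. -/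
def ecfQ (x : ℝ) : ℕ → ℤ := cfQ (ecfDigK x) (ecfDigXi x)

/-- `τ(x) = min {j ≥ 0 : T^j(x) ∈ (0,1/2]}`. -/
def ecfTau (x : ℝ) : ℕ := sInf {j : ℕ | ecfT^[j] x ∈ Set.Ioc (0:ℝ) (1/2)}

/-- The jump transformation `R(x) = T^{τ(x)+1}(x)`. -/
def ecfR (x : ℝ) : ℝ := ecfT^[ecfTau x + 1] x

/-- `ν_0(x) = 1`, `ν_n(x) = ν_{n-1}(x) + τ(R^{n-1}(x)) + 1`. -/
def ecfNu (x : ℝ) : ℕ → ℕ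
  | 0 => 1
  | (n+1) => ecfNu x n + ecfTau (ecfR^[n] x) + 1

/-- The `R`-denominators: `q̂_0(x) = 1`, `q̂_n(x) = q_{ν_n(x)}(x)`. -/
def ecfQhat (x : ℝ) (n : ℕ) : ℤ := if n = 0 then 1 else ecfQ x (ecfNu x n)

/-- The renewal time `n̂_L(x) = min {n ≥ 1 : q̂_n(x) > L}`. -/
def ecfNhat (x : ℝ) (L : ℝ) : ℕ := sInf {n : ℕ | 1 ≤ n ∧ L < (ecfQhat x n : ℝ)}

/-- The `R`-invariant probability measure `μ`, with density
`f(x) = (1/log 3)(1/(3-x) + 1/(1+x))` on `(0,1]`. -/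
def ecfMu : Measure ℝ :=
  (volume.restrict (Set.Ioc 0 1)).withDensity
    (fun x => ENNReal.ofReal ((1/Real.log 3) * (1/(3-x) + 1/(1+x))))

/-- Σ-coding components: `h_n(x) = τ(R^{n-1}(x))`. -/
def sigmaH (x : ℝ) (n : ℕ) : ℕ := ecfTau (ecfR^[n-1] x)

/-- Σ-coding components: `m_n(x) = k_{ν_n(x)-1}(x)`. -/
def sigmaM (x : ℝ) (n : ℕ) : ℕ := ecfDigK x (ecfNu x n - 1)

/-- Σ-coding components: `ε_n(x) = ξ_{ν_n(x)-1}(x)`. -/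
def sigmaE (x : ℝ) (n : ℕ) : ℤ := ecfDigXi x (ecfNu x n - 1)

/-- The alphabet `Σ = ℕ₀ × ((ℕ × {±1}) ∖ {(1,-1)})`, as a subset of `ℕ × (ℕ × ℤ)`. -/
def SigmaSymb : Set (ℕ × (ℕ × ℤ)) :=
  {s | 1 ≤ s.2.1 ∧ ((s.2.2 = 1 ∨ s.2.2 = -1) ∧ ¬(s.2.1 = 1 ∧ s.2.2 = -1))}

/-- The full Σ-coding `σ_n(x) = (h_n, (m_n, ε_n))`. -/
def sigmaCode (x : ℝ) (n : ℕ) : ℕ × (ℕ × ℤ) := (sigmaH x n, (sigmaM x n, sigmaE x n))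

end


noncomputable section
open Set MeasureTheory Filter

namespace ECFaux

/-- Möbius maps with integer coefficients and nonzero determinant preserve irrationality. -/
lemma moebius_irr (p q r s : ℤ) {x : ℝ} (hx : Irrational x) (hdet : p*s - q*r ≠ 0)
    (hden : (r:ℝ)*x + (s:ℝ) ≠ 0) : Irrational (((p:ℝ)*x + q)/((r:ℝ)*x + s)) := by
  rintro ⟨c, hc⟩
  rw [eq_div_iff hden] at hc
  by_cases h : (p:ℝ) - (c:ℝ)*r = 0
  · have h1 : (c:ℝ)*s - q = 0 := by linear_combination hc + x*h
    have h2 : ((p:ℝ)*s - q*r) = 0 := by linear_combination (s:ℝ)*h + (r:ℝ)*h1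
    have h3 : ((p*s - q*r : ℤ) : ℝ) = 0 := by push_cast; linarith
    exact hdet (by exact_mod_cast h3)
  · apply hx
    refine ⟨((c:ℚ)*s - q)/((p:ℚ) - c*r), ?_⟩
    have hne' : ((p:ℝ) - (c:ℝ)*r) ≠ 0 := h
    push_cast
    rw [div_eq_iff hne']
    linear_combination hc

abbrev Idx := Bool × ℕ × ℕ

def brk (i : Idx) : ℕ := if i.1 then i.2.1 + 1 else i.2.1 + 2
def brxi (i : Idx) : ℝ := if i.1 then 1 else -1
def brt (i : Idx) : ℕ := i.2.2
def phiM (t : ℕ) (w : ℝ) : ℝ := ((t:ℝ)*w - ((t:ℝ)-1)) / (((t:ℝ)+1)*w - (t:ℝ))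
def brP (i : Idx) (y : ℝ) : ℝ := phiM (brt i) (2*(brk i) + brxi i * y)
def brI (i : Idx) (a b : ℝ) : Set ℝ :=
  if i.1 then Set.Ico (brP i b) (brP i a) else Set.Ioc (brP i a) (brP i b)
def brLo (i : Idx) (a b : ℝ) : ℝ := if i.1 then brP i b else brP i a
def brHi (i : Idx) (a b : ℝ) : ℝ := if i.1 then brP i a else brP i b
def Fm (y : ℝ) : ℝ := Real.log (1+y) - Real.log (3-y)
def psiM (t : ℕ) (x : ℝ) : ℝ := (((t:ℝ)+1)*x - (t:ℝ)) / ((t:ℝ)*x - ((t:ℝ)-1))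

lemma phiM_den_pos (t : ℕ) {w : ℝ} (hw : 1 ≤ w) : 0 < ((t:ℝ)+1)*w - t := by
  nlinarith [Nat.cast_nonneg (α := ℝ) t]

lemma phiM_sub (t : ℕ) {w1 w2 : ℝ} (h1 : 1 ≤ w1) (h2 : 1 ≤ w2) :
    phiM t w1 - phiM t w2 = (w2 - w1) / ((((t:ℝ)+1)*w1 - t) * (((t:ℝ)+1)*w2 - t)) := by
  have d1 := phiM_den_pos t h1; have d2 := phiM_den_pos t h2
  rw [phiM, phiM, div_sub_div _ _ d1.ne' d2.ne', div_eq_div_iff (mul_pos d1 d2).ne' (mul_pos d1 d2).ne']; ring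

lemma phiM_lt (t : ℕ) {w1 w2 : ℝ} (h1 : 1 ≤ w1) (h : w1 < w2) : phiM t w2 < phiM t w1 := by
  have h2 : 1 ≤ w2 := le_trans h1 h.le
  have hs := phiM_sub t h1 h2
  have hpos : 0 < (w2 - w1) / ((((t:ℝ)+1)*w1 - t) * (((t:ℝ)+1)*w2 - t)) :=
    div_pos (by linarith) (mul_pos (phiM_den_pos t h1) (phiM_den_pos t h2))
  linarith [hs ▸ hpos]

lemma phiM_le (t : ℕ) {w1 w2 : ℝ} (h1 : 1 ≤ w1) (h : w1 ≤ w2) : phiM t w2 ≤ phiM t w1 := by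
  rcases eq_or_lt_of_le h with rfl | h'
  · exact le_refl _
  · exact (phiM_lt t h1 h').le

lemma phiM_lt_rev (t : ℕ) {w1 w2 : ℝ} (h1 : 1 ≤ w1) (h2 : 1 ≤ w2)
    (h : phiM t w1 < phiM t w2) : w2 < w1 := by
  by_contra hc; push_neg at hc
  exact absurd h (not_lt.2 (phiM_le t h1 hc))

lemma phiM_le_rev (t : ℕ) {w1 w2 : ℝ} (h1 : 1 ≤ w1) (h2 : 1 ≤ w2)
    (h : phiM t w1 ≤ phiM t w2) : w2 ≤ w1 := by
  by_contra hc; push_neg at hc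
  exact absurd h (not_le.2 (phiM_lt t h1 hc))

lemma phiM_lb (t : ℕ) {w : ℝ} (hw : 1 ≤ w) : (t:ℝ)/(t+1) < phiM t w := by
  have d := phiM_den_pos t hw
  have ht : (0:ℝ) < (t:ℝ)+1 := by positivity
  have key : phiM t w - (t:ℝ)/((t:ℝ)+1) = 1/(((t:ℝ)+1)*((((t:ℝ)+1))*w - t)) := by
    rw [phiM, div_sub_div _ _ d.ne' ht.ne', div_eq_div_iff (mul_pos d ht).ne' (by positivity)]; ring
  have : 0 < 1/(((t:ℝ)+1)*((((t:ℝ)+1))*w - t)) := by positivity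
  linarith [key ▸ this]

lemma phiM_ub (t : ℕ) {w : ℝ} (hw : 2 ≤ w) : phiM t w ≤ ((t:ℝ)+1)/((t:ℝ)+2) := by
  have d := phiM_den_pos t (by linarith : (1:ℝ) ≤ w)
  have ht : (0:ℝ) < (t:ℝ)+2 := by positivity
  have key : ((t:ℝ)+1)/((t:ℝ)+2) - phiM t w = (w-2)/(((t:ℝ)+2)*((((t:ℝ)+1))*w - t)) := by
    rw [phiM, div_sub_div _ _ ht.ne' d.ne', div_eq_div_iff (mul_pos ht d).ne' (by positivity)]; ring
  have : 0 ≤ (w-2)/(((t:ℝ)+2)*((((t:ℝ)+1))*w - t)) := by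
    apply div_nonneg (by linarith) (by positivity)
  linarith [key ▸ this]

lemma phiM_ub' (t : ℕ) {w : ℝ} (hw : 2 < w) : phiM t w < ((t:ℝ)+1)/((t:ℝ)+2) := by
  have d := phiM_den_pos t (by linarith : (1:ℝ) ≤ w)
  have ht : (0:ℝ) < (t:ℝ)+2 := by positivity
  have key : ((t:ℝ)+1)/((t:ℝ)+2) - phiM t w = (w-2)/(((t:ℝ)+2)*((((t:ℝ)+1))*w - t)) := by
    rw [phiM, div_sub_div _ _ ht.ne' d.ne', div_eq_div_iff (mul_pos ht d).ne' (by positivity)]; ring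
  have : 0 < (w-2)/(((t:ℝ)+2)*((((t:ℝ)+1))*w - t)) := by
    apply div_pos (by linarith) (by positivity)
  linarith [key ▸ this]

section chainlemmas

variable {t : ℕ} {x : ℝ}

lemma tcast_pos (t : ℕ) : (0:ℝ) < (t:ℝ)+1 := by positivity

lemma x_lt_one (h2 : x < ((t:ℝ)+1)/((t:ℝ)+2)) : x < 1 := by
  have ht : (0:ℝ) < (t:ℝ)+2 := by positivity
  have : ((t:ℝ)+1)/((t:ℝ)+2) < 1 := by rw [div_lt_one ht]; linarith
  linarith

lemma psiM_den_pos (h1 : (t:ℝ)/(t+1) < x) (h2 : x < ((t:ℝ)+1)/((t:ℝ)+2)) :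
    0 < (t:ℝ)*x - ((t:ℝ)-1) := by
  have ht := tcast_pos t
  have hx1 : x < 1 := x_lt_one h2
  rw [div_lt_iff₀ ht] at h1
  nlinarith [Nat.cast_nonneg (α := ℝ) t]

lemma psiM_num_pos (h1 : (t:ℝ)/(t+1) < x) : 0 < ((t:ℝ)+1)*x - t := by
  have ht := tcast_pos t
  rw [div_lt_iff₀ ht] at h1
  linarith

lemma psiM_mem (h1 : (t:ℝ)/(t+1) < x) (h2 : x < ((t:ℝ)+1)/((t:ℝ)+2)) :
    psiM t x ∈ Set.Ioo (0:ℝ) (1/2) := by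
  have hd := psiM_den_pos h1 h2
  have hn := psiM_num_pos h1
  constructor
  · exact div_pos hn hd
  · rw [psiM, div_lt_iff₀ hd]
    have ht : (0:ℝ) < (t:ℝ)+2 := by positivity
    rw [lt_div_iff₀ ht] at h2
    nlinarith

lemma psiM_irr (hx : Irrational x) (h1 : (t:ℝ)/(t+1) < x) (h2 : x < ((t:ℝ)+1)/((t:ℝ)+2)) :
    Irrational (psiM t x) := by
  have hd := psiM_den_pos h1 h2
  have h2' : psiM t x = ((((t:ℤ)+1 : ℤ):ℝ)*x + ((-(t:ℤ) : ℤ):ℝ)) / (((t:ℤ):ℝ)*x + ((-((t:ℤ)-1) : ℤ):ℝ)) := by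
    rw [psiM]; push_cast; ring
  rw [h2']
  exact moebius_irr ((t:ℤ)+1) (-(t:ℤ)) (t:ℤ) (-((t:ℤ)-1)) hx
    (by push_cast; ring_nf; omega) (by push_cast; linarith)

lemma psiM_phiM (h1 : (t:ℝ)/(t+1) < x) (h2 : x < ((t:ℝ)+1)/((t:ℝ)+2)) :
    phiM t (1/(psiM t x)) = x := by
  have hd := psiM_den_pos h1 h2
  have hn := psiM_num_pos h1
  rw [psiM, one_div_div, phiM]
  rw [div_eq_iff]
  · generalize hD : ((t:ℝ)+1)*x - t = D at hn ⊢; have := hn.ne'; field_simp; rw [← hD]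
    ring
  · have key : ((t:ℝ)+1)*(((t:ℝ)*x - ((t:ℝ)-1))/(((t:ℝ)+1)*x - t)) - t
        = 1/(((t:ℝ)+1)*x - t) := by rw [mul_div_assoc', div_sub' hn.ne', div_left_inj' hn.ne']; ring
    rw [key]
    positivity

end chainlemmas

end ECFaux

namespace ECFaux

lemma irr_one_div {x : ℝ} (hx : Irrational x) : Irrational (1/x) := by
  rw [one_div]; exact hx.inv

lemma ecf_on_upper {x : ℝ} (hx : Irrational x) (h : x ∈ Set.Ioo (1/2 : ℝ) 1) :
    ecfT x = 2 - 1/x := by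
  have hx0 : 0 < x := lt_trans one_half_pos h.1
  have h1 : 1 < 1/x := by rw [lt_div_iff₀ hx0]; linarith [h.2]
  have h2 : 1/x < 2 := by rw [div_lt_iff₀ hx0]; linarith [h.1]
  have hfl : ⌊1/x⌋ = 1 := by
    rw [Int.floor_eq_iff]
    constructor
    · exact_mod_cast h1.le
    · push_cast; linarith
  have hK : ecfK x = 1 := by rw [ecfK, hfl]; rfl
  have hXi : ecfXi x = -1 := by rw [ecfXi, hfl]; rfl
  rw [ecfT, hK, hXi]; push_cast; ring

lemma Tstep {u : ℝ} (hu : Irrational u) (h : u ∈ Set.Ioo (0:ℝ) (1/2)) :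
    ∃ (k : ℕ) (e : ℝ), 1 ≤ k ∧ (e = 1 ∨ e = -1) ∧ (e = -1 → 2 ≤ k) ∧
      2*(k:ℝ) + e * ecfT u = 1/u ∧ ecfT u ∈ Set.Ioo (0:ℝ) 1 ∧ Irrational (ecfT u) := by
  have hu0 : 0 < u := h.1
  have hinv : Irrational (1/u) := irr_one_div hu
  have h2 : 2 < 1/u := by rw [lt_div_iff₀ hu0]; linarith [h.2]
  have hm2 : 2 ≤ ⌊1/u⌋ := by
    rw [Int.le_floor]; exact_mod_cast h2.le
  have hlow : (⌊1/u⌋:ℝ) < 1/u := lt_of_le_of_ne (Int.floor_le _) (fun hh => hinv ⟨(⌊1/u⌋ : ℚ), by push_cast; exact hh⟩)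
  have hhigh : 1/u < ⌊1/u⌋+1 := Int.lt_floor_add_one _
  obtain ⟨n, hn⟩ : ∃ n : ℕ, ⌊1/u⌋ = (n:ℤ) := ⟨⌊1/u⌋.toNat, (Int.toNat_of_nonneg (by omega)).symm⟩
  have hn2 : 2 ≤ n := by exact_mod_cast hn ▸ hm2
  rcases Nat.even_or_odd n with ⟨K, hK⟩ | ⟨K, hK⟩
  · -- n = K + K, digit (K, +1)
    have hK1 : 1 ≤ K := by omega
    have hXi : ecfXi u = 1 := by rw [ecfXi, hn]; simp [hK]; omega
    have hKval : ecfK u = K := by rw [ecfK, hn]; norm_num [hK]; omega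
    have hTu : ecfT u = 1/u - 2*K := by
      rw [ecfT, hXi, hKval]; push_cast; ring
    have hcast : ((n:ℤ):ℝ) = 2*(K:ℝ) := by push_cast [hK]; ring
    have hlow' : 2*(K:ℝ) < 1/u := by rw [← hcast, ← hn]; exact hlow
    have hhigh' : 1/u < 2*(K:ℝ)+1 := by
      have : ((⌊1/u⌋:ℤ):ℝ)+1 = 2*(K:ℝ)+1 := by rw [hn, hcast]
      linarith [this ▸ hhigh]
    refine ⟨K, 1, hK1, Or.inl rfl, by norm_num, by rw [hTu]; ring, ?_, ?_⟩
    · rw [hTu]; constructor <;> [linarith; linarith]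
    · rw [hTu]
      have : 1/u - 2*(K:ℝ) = 1/u - ((2*K : ℤ):ℝ) := by push_cast; ring
      rw [this]
      exact hinv.sub_intCast _
  · -- n = 2K+1, digit (K+1, -1)
    have hK1 : 1 ≤ K := by omega
    have hXi : ecfXi u = -1 := by rw [ecfXi, hn]; simp [hK] <;> omega
    have hKval : ecfK u = K+1 := by rw [ecfK, hn]; norm_num [hK]; omega
    have hTu : ecfT u = 2*((K:ℝ)+1) - 1/u := by
      rw [ecfT, hXi, hKval]; push_cast; ring
    have hcast : ((n:ℤ):ℝ) = 2*(K:ℝ)+1 := by push_cast [hK]; ring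
    have hlow' : 2*(K:ℝ)+1 < 1/u := by rw [← hcast, ← hn]; exact hlow
    have hhigh' : 1/u < 2*(K:ℝ)+2 := by
      have : ((⌊1/u⌋:ℤ):ℝ)+1 = 2*(K:ℝ)+2 := by rw [hn, hcast]; ring
      linarith [this ▸ hhigh]
    refine ⟨K+1, -1, by omega, Or.inr rfl, fun _ => by omega, by push_cast; rw [hTu]; ring, ?_, ?_⟩
    · rw [hTu]; constructor <;> (push_cast; linarith)
    · rw [hTu]
      have : 2*((K:ℝ)+1) - 1/u = ((2*(K+1) : ℤ):ℝ) - 1/u := by push_cast; ring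
      rw [this]
      exact hinv.intCast_sub _

lemma irr_two_sub_inv {x : ℝ} (hx : Irrational x) (hx0 : x ≠ 0) : Irrational (2 - 1/x) := by
  have : (2:ℝ) - 1/x = (((2:ℤ):ℝ)*x + ((-1:ℤ):ℝ))/(((1:ℤ):ℝ)*x + ((0:ℤ):ℝ)) := by
    push_cast; field_simp [hx0]; ring
  rw [this]
  exact moebius_irr 2 (-1) 1 0 hx (by norm_num) (by push_cast; simpa using hx0)

lemma psiM_step (t : ℕ) {x : ℝ} (h1 : ((t:ℝ)+1)/((t:ℝ)+2) < x) (h2 : x < 1) :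
    psiM t (2 - 1/x) = psiM (t+1) x := by
  have ht : (0:ℝ) < (t:ℝ)+2 := by positivity
  have hx0 : 0 < x := lt_trans (by positivity) h1
  rw [div_lt_iff₀ ht] at h1
  have hden : 0 < ((t:ℝ)+1)*x - t := by nlinarith
  have hden' : (t:ℝ)*(2 - 1/x) - ((t:ℝ)-1) = (((t:ℝ)+1)*x - t)/x := by
    field_simp; ring
  have hA : (t:ℝ)*(2 - 1/x) - ((t:ℝ)-1) ≠ 0 := by rw [hden']; positivity
  have hB : ((t:ℝ)+1)*x - ((t:ℝ)+1-1) ≠ 0 := by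
    have hh : ((t:ℝ)+1)*x - ((t:ℝ)+1-1) = ((t:ℝ)+1)*x - t := by ring
    rw [hh]; exact hden.ne'
  rw [psiM, psiM]
  push_cast
  rw [div_eq_div_iff hA hB]
  field_simp
  ring

lemma chain (t : ℕ) : ∀ {x : ℝ}, Irrational x →
    x ∈ Set.Ioo ((t:ℝ)/(t+1)) (((t:ℝ)+1)/((t:ℝ)+2)) →
    (∀ j, j < t → ecfT^[j] x ∈ Set.Ioo (1/2 : ℝ) 1) ∧ ecfT^[t] x = psiM t x := by
  induction t with
  | zero =>
    intro x _ _
    refine ⟨fun j hj => absurd hj (by omega), ?_⟩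
    simp [psiM]
  | succ t ih =>
    intro x hx h
    have hb1 : ((t:ℝ)+1)/((t:ℝ)+2) < x := by
      have : ((↑(t+1):ℝ))/((↑(t+1):ℝ)+1) = ((t:ℝ)+1)/((t:ℝ)+2) := by push_cast; ring_nf
      rw [← this]; exact h.1
    have hb2 : x < ((t:ℝ)+2)/((t:ℝ)+3) := by
      have : ((↑(t+1):ℝ)+1)/((↑(t+1):ℝ)+2) = ((t:ℝ)+2)/((t:ℝ)+3) := by push_cast; ring_nf
      rw [← this]; exact h.2
    have ht2 : (0:ℝ) < (t:ℝ)+2 := by positivity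
    have ht3 : (0:ℝ) < (t:ℝ)+3 := by positivity
    have hxhalf : (1/2 : ℝ) < x := by
      have : (1/2 : ℝ) ≤ ((t:ℝ)+1)/((t:ℝ)+2) := by
        rw [div_le_div_iff₀ (by norm_num) ht2]; linarith [Nat.cast_nonneg (α := ℝ) t]
      linarith
    have hx1 : x < 1 := by
      have : ((t:ℝ)+2)/((t:ℝ)+3) < 1 := by rw [div_lt_one ht3]; linarith
      linarith
    have hx0 : 0 < x := by linarith
    have hTx : ecfT x = 2 - 1/x := ecf_on_upper hx ⟨hxhalf, hx1⟩
    have hTirr : Irrational (ecfT x) := by rw [hTx]; exact irr_two_sub_inv hx hx0.ne'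
    have hTmem : ecfT x ∈ Set.Ioo ((t:ℝ)/(t+1)) (((t:ℝ)+1)/((t:ℝ)+2)) := by
      rw [hTx]
      have ht1 : (0:ℝ) < (t:ℝ)+1 := by positivity
      have e1 : 1/x < ((t:ℝ)+2)/((t:ℝ)+1) := by
        rw [div_lt_div_iff₀ hx0 ht1]
        rw [div_lt_iff₀ ht2] at hb1
        linarith
      have e2 : ((t:ℝ)+3)/((t:ℝ)+2) < 1/x := by
        rw [div_lt_div_iff₀ ht2 hx0]
        rw [lt_div_iff₀ ht3] at hb2
        linarith
      have id1 : ((t:ℝ)+2)/((t:ℝ)+1) = 2 - (t:ℝ)/((t:ℝ)+1) := by field_simp; ring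
      have id2 : ((t:ℝ)+3)/((t:ℝ)+2) = 2 - ((t:ℝ)+1)/((t:ℝ)+2) := by field_simp; ring
      constructor
      · rw [id1] at e1; linarith
      · rw [id2] at e2; linarith
    obtain ⟨ihj, ihiter⟩ := ih hTirr hTmem
    constructor
    · intro j hj
      match j with
      | 0 => exact ⟨hxhalf, hx1⟩
      | (j+1) =>
        rw [Function.iterate_succ_apply]
        exact ihj j (by omega)
    · rw [Function.iterate_succ_apply, ihiter, hTx]
      exact psiM_step t hb1 hx1

lemma exists_t {x : ℝ} (hx : Irrational x) (h : x ∈ Set.Ioo (0:ℝ) 1) :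
    ∃ t : ℕ, x ∈ Set.Ioo ((t:ℝ)/(t+1)) (((t:ℝ)+1)/((t:ℝ)+2)) := by
  have h1 : 0 < 1 - x := by linarith [h.2]
  set z := 1/(1-x) with hz
  have hz1 : 1 < z := by rw [hz, lt_div_iff₀ h1]; linarith [h.1]
  have hzirr : Irrational z := by
    have : z = (((0:ℤ):ℝ)*x + ((1:ℤ):ℝ))/((((-1):ℤ):ℝ)*x + ((1:ℤ):ℝ)) := by
      rw [hz]; push_cast; ring_nf
    rw [this]
    exact moebius_irr 0 1 (-1) 1 hx (by norm_num) (by push_cast; intro hc; linarith [h.2, hc])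
  have hfl1 : 1 ≤ ⌊z⌋ := by rw [Int.le_floor]; exact_mod_cast hz1.le
  set t : ℕ := (⌊z⌋ - 1).toNat with htdef
  have hcast : ((t:ℕ):ℝ) = (⌊z⌋:ℝ) - 1 := by
    have h' : ((⌊z⌋ - 1).toNat : ℤ) = ⌊z⌋ - 1 := Int.toNat_of_nonneg (by omega)
    calc ((t:ℕ):ℝ) = (((t : ℤ)):ℝ) := by push_cast; ring
    _ = ((⌊z⌋ - 1 : ℤ):ℝ) := by rw [htdef, h']
    _ = (⌊z⌋:ℝ) - 1 := by push_cast; ring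
  have hlow : (t:ℝ) + 1 < z := by
    rw [hcast]
    have h2' : (⌊z⌋:ℝ) ≤ z := Int.floor_le z
    have hne : (⌊z⌋:ℝ) ≠ z := fun hh => hzirr ⟨(⌊z⌋:ℚ), by push_cast; exact hh⟩
    have := lt_of_le_of_ne h2' hne; linarith
  have hhigh : z < (t:ℝ) + 2 := by
    have := Int.lt_floor_add_one z
    rw [hcast]; linarith
  have hzpos : 0 < z := by linarith
  have hxz : x = 1 - 1/z := by rw [hz]; field_simp [h1.ne']; ring
  have ht1 : (0:ℝ) < (t:ℝ)+1 := by positivity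
  have ht2 : (0:ℝ) < (t:ℝ)+2 := by positivity
  refine ⟨t, Set.mem_Ioo.2 ⟨?_, ?_⟩⟩
  · rw [hxz]
    have hlt : 1/z < 1/((t:ℝ)+1) := one_div_lt_one_div_of_lt ht1 hlow
    have id : (t:ℝ)/((t:ℝ)+1) = 1 - 1/((t:ℝ)+1) := by field_simp [ht1.ne']; ring
    linarith
  · rw [hxz]
    have hlt : 1/((t:ℝ)+2) < 1/z := one_div_lt_one_div_of_lt hzpos hhigh
    have id : ((t:ℝ)+1)/((t:ℝ)+2) = 1 - 1/((t:ℝ)+2) := by field_simp; ring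
    linarith

end ECFaux

namespace ECFaux

lemma key {x : ℝ} (hx : x ∈ ECFdom) :
    ∃ i : Idx, Irrational (ecfR x) ∧ ecfR x ∈ Set.Ioo (0:ℝ) 1 ∧ x = brP i (ecfR x) := by
  obtain ⟨⟨hx0, hx1⟩, hirr⟩ := hx
  have hxlt1 : x < 1 := lt_of_le_of_ne hx1 hirr.ne_one
  obtain ⟨t, hmem⟩ := exists_t hirr ⟨hx0, hxlt1⟩
  obtain ⟨hlow, hiter⟩ := chain t hirr hmem
  have hu := psiM_mem hmem.1 hmem.2
  have huirr := psiM_irr hirr hmem.1 hmem.2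
  have htau : ecfTau x = t := by
    apply le_antisymm
    · apply Nat.sInf_le
      show ecfT^[t] x ∈ Set.Ioc (0:ℝ) (1/2)
      rw [hiter]; exact ⟨hu.1, hu.2.le⟩
    · by_contra hc
      push_neg at hc
      have hne : ({j : ℕ | ecfT^[j] x ∈ Set.Ioc (0:ℝ) (1/2)}).Nonempty :=
        ⟨t, by rw [Set.mem_setOf_eq, hiter]; exact ⟨hu.1, hu.2.le⟩⟩
      have hmemInf : ecfT^[ecfTau x] x ∈ Set.Ioc (0:ℝ) (1/2) := Nat.sInf_mem hne
      have hgt := (hlow _ hc).1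
      linarith [hmemInf.2]
  obtain ⟨k, e, hk1, he, hke, heq, hT01, hTirr⟩ := Tstep huirr hu
  have hRx : ecfR x = ecfT (psiM t x) := by
    rw [ecfR, htau, Function.iterate_succ_apply', hiter]
  have hxeq := (psiM_phiM hmem.1 hmem.2).symm
  rcases he with he1 | he2
  · refine ⟨(true, k-1, t), by rw [hRx]; exact hTirr, by rw [hRx]; exact hT01, ?_⟩
    have hbrk : brk (true, k-1, t) = k := by simp [brk]; omega
    have hbx : brxi (true, k-1, t) = 1 := rfl
    rw [brP, hbrk, hbx, brt, hRx]
    rw [he1] at heq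
    rw [heq]
    exact hxeq
  · have hk2 : 2 ≤ k := hke he2
    refine ⟨(false, k-2, t), by rw [hRx]; exact hTirr, by rw [hRx]; exact hT01, ?_⟩
    have hbrk : brk (false, k-2, t) = k := by simp [brk]; omega
    have hbx : brxi (false, k-2, t) = -1 := rfl
    rw [brP, hbrk, hbx, brt, hRx]
    rw [he2] at heq
    rw [heq]
    exact hxeq

lemma ecfR_mem {x : ℝ} (hx : x ∈ ECFdom) : Irrational (ecfR x) ∧ ecfR x ∈ Set.Ioo (0:ℝ) 1 := by
  obtain ⟨i, h1, h2, _⟩ := key hx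
  exact ⟨h1, h2⟩

lemma brP_mem_brI {i : Idx} {a b y : ℝ} (ha : 0 ≤ a) (hb : b ≤ 1)
    (hy : y ∈ Set.Ioc a b) (hy01 : y ∈ Set.Ioo 0 1) : brP i y ∈ brI i a b := by
  obtain ⟨β, j, t⟩ := i
  have hjr : (0:ℝ) ≤ (j:ℝ) := Nat.cast_nonneg j
  cases β
  · -- ξ = -1, k = j+2 : brI = Ioc (brP a) (brP b)
    simp only [brI, brP, brk, brxi, brt, if_neg (by simp : ¬((false:Bool) = true))]
    push_cast
    constructor
    · apply phiM_lt t (by linarith [hy01.2] : (1:ℝ) ≤ 2*((j:ℝ)+2) + (-1)*y)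
      linarith [hy.1]
    · apply phiM_le t (by linarith : (1:ℝ) ≤ 2*((j:ℝ)+2) + (-1)*b)
      linarith [hy.2]
  · -- ξ = 1, k = j+1 : brI = Ico (brP b) (brP a)
    simp only [brI, brP, brk, brxi, brt, if_pos rfl]
    push_cast
    constructor
    · apply phiM_le t (by linarith [hy01.1] : (1:ℝ) ≤ 2*((j:ℝ)+1) + 1*y)
      linarith [hy.2]
    · apply phiM_lt t (by linarith [ha] : (1:ℝ) ≤ 2*((j:ℝ)+1) + 1*a)
      linarith [hy.1]

lemma nat_frac_mono {m n : ℕ} (h : m ≤ n) : (m:ℝ)/((m:ℝ)+1) ≤ (n:ℝ)/((n:ℝ)+1) := by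
  have hm : (0:ℝ) < (m:ℝ)+1 := by positivity
  have hn : (0:ℝ) < (n:ℝ)+1 := by positivity
  rw [div_le_div_iff₀ hm hn]
  have : (m:ℝ) ≤ n := by exact_mod_cast h
  nlinarith

lemma t_match {t t' : ℕ} {x : ℝ}
    (h1 : (t:ℝ)/((t:ℝ)+1) < x) (h2 : x ≤ ((t:ℝ)+1)/((t:ℝ)+2))
    (h1' : (t':ℝ)/((t':ℝ)+1) < x) (h2' : x ≤ ((t':ℝ)+1)/((t':ℝ)+2)) : t = t' := by
  by_contra hne
  rcases Nat.lt_or_ge t t' with hlt | hge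
  · have hle : t+1 ≤ t' := hlt
    have hm := nat_frac_mono (m := t+1) (n := t') hle
    have hm' : ((t:ℝ)+1)/((t:ℝ)+2) ≤ (t':ℝ)/((t':ℝ)+1) := by
      convert hm using 2 <;> push_cast <;> ring
    linarith
  · have hlt' : t' < t := by omega
    have hle : t'+1 ≤ t := hlt'
    have hm := nat_frac_mono (m := t'+1) (n := t) hle
    have hm' : ((t':ℝ)+1)/((t':ℝ)+2) ≤ (t:ℝ)/((t:ℝ)+1) := by
      convert hm using 2 <;> push_cast <;> ring
    linarith

/-- membership in a branch interval pins down the interval `(t/(t+1), (t+1)/(t+2)]`. -/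
lemma brI_t_bounds {i : Idx} {a b x : ℝ} (ha : 0 ≤ a) (hab : a ≤ b) (hb : b ≤ 1)
    (hxI : x ∈ brI i a b) :
    (brt i:ℝ)/((brt i:ℝ)+1) < x ∧ x ≤ ((brt i:ℝ)+1)/((brt i:ℝ)+2) := by
  obtain ⟨β, j, t⟩ := i
  have hjr : (0:ℝ) ≤ (j:ℝ) := Nat.cast_nonneg j
  cases β
  · simp only [brI, brP, brk, brxi, brt, if_neg (by simp : ¬((false:Bool) = true))] at hxI ⊢
    push_cast at hxI ⊢
    constructor
    · exact lt_of_lt_of_le (phiM_lb t (by linarith : (1:ℝ) ≤ 2*((j:ℝ)+2) + (-1)*a)) hxI.1.le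
    · exact le_trans hxI.2 (phiM_ub t (by linarith : (2:ℝ) ≤ 2*((j:ℝ)+2) + (-1)*b))
  · simp only [brI, brP, brk, brxi, brt, if_pos rfl] at hxI ⊢
    push_cast at hxI ⊢
    constructor
    · exact lt_of_lt_of_le (phiM_lb t (by linarith : (1:ℝ) ≤ 2*((j:ℝ)+1) + 1*b)) hxI.1
    · exact le_trans hxI.2.le (phiM_ub t (by linarith : (2:ℝ) ≤ 2*((j:ℝ)+1) + 1*a))

lemma brP_t_bounds {i : Idx} {y x : ℝ} (hy0 : 0 < y) (hy1 : y < 1)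
    (hx : x = brP i y) :
    (brt i:ℝ)/((brt i:ℝ)+1) < x ∧ x ≤ ((brt i:ℝ)+1)/((brt i:ℝ)+2) := by
  obtain ⟨β, j, t⟩ := i
  have hjr : (0:ℝ) ≤ (j:ℝ) := Nat.cast_nonneg j
  subst hx
  cases β
  · simp only [brP, brk, brxi, brt, if_neg (by simp : ¬((false:Bool) = true))]
    push_cast
    exact ⟨phiM_lb t (by linarith), phiM_ub t (by linarith)⟩
  · simp only [brP, brk, brxi, brt, if_pos rfl]
    push_cast
    exact ⟨phiM_lb t (by linarith), phiM_ub t (by linarith)⟩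

lemma unique {a b : ℝ} (ha : 0 ≤ a) (hab : a ≤ b) (hb : b ≤ 1) {i i' : Idx} {x y : ℝ}
    (hxI : x ∈ brI i a b) (hy01 : y ∈ Set.Ioo 0 1)
    (hx : x = brP i' y) : i' = i ∧ y ∈ Set.Ioc a b := by
  obtain ⟨ht1, ht2⟩ := brI_t_bounds ha hab hb hxI
  obtain ⟨ht1', ht2'⟩ := brP_t_bounds hy01.1 hy01.2 hx
  have htt : brt i = brt i' := t_match ht1 ht2 ht1' ht2'
  obtain ⟨β, j, t⟩ := i
  obtain ⟨β', j', t'⟩ := i'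
  simp only [brt] at htt
  subst htt
  have hjr : (0:ℝ) ≤ (j:ℝ) := Nat.cast_nonneg j
  have hjr' : (0:ℝ) ≤ (j':ℝ) := Nat.cast_nonneg j'
  have hy0 := hy01.1
  have hy1 := hy01.2
  rcases Bool.dichotomy β with hβ | hβ <;> subst hβ <;>
    rcases Bool.dichotomy β' with hβ' | hβ' <;> subst hβ'
  · -- β = false, β' = false
    simp only [brI, brP, brk, brxi, brt, Bool.false_eq_true, if_false] at hxI hx
    push_cast at hxI hx
    rw [hx] at hxI
    have hA : 2*((j':ℝ)+2) + -1*y < 2*((j:ℝ)+2) + -1*a :=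
      phiM_lt_rev t (by linarith) (by linarith) hxI.1
    have hB : 2*((j:ℝ)+2) + -1*b ≤ 2*((j':ℝ)+2) + -1*y :=
      phiM_le_rev t (by linarith) (by linarith) hxI.2
    have n1 : 2*(j'+2) < 2*(j+2) + 1 := by
      exact_mod_cast (show ((2*(j'+2):ℕ):ℝ) < ((2*(j+2)+1:ℕ):ℝ) by push_cast; linarith)
    have n2 : 2*(j+2) < 2*(j'+2) + 1 := by
      exact_mod_cast (show ((2*(j+2):ℕ):ℝ) < ((2*(j'+2)+1:ℕ):ℝ) by push_cast; linarith)
    have hjj : j' = j := by omega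
    subst hjj
    exact ⟨rfl, by constructor <;> linarith⟩
  · -- β = false, β' = true : contradiction
    exfalso
    simp only [brI, brP, brk, brxi, brt, Bool.false_eq_true, if_false, if_true] at hxI hx
    push_cast at hxI hx
    rw [hx] at hxI
    have hA : 2*((j':ℝ)+1) + 1*y < 2*((j:ℝ)+2) + -1*a :=
      phiM_lt_rev t (by linarith) (by linarith) hxI.1
    have hB : 2*((j:ℝ)+2) + -1*b ≤ 2*((j':ℝ)+1) + 1*y :=
      phiM_le_rev t (by linarith) (by linarith) hxI.2
    have n1 : 2*(j'+1) < 2*(j+2) := by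
      exact_mod_cast (show ((2*(j'+1):ℕ):ℝ) < ((2*(j+2):ℕ):ℝ) by push_cast; linarith)
    have n2 : 2*(j+2) < 2*(j'+1) + 2 := by
      exact_mod_cast (show ((2*(j+2):ℕ):ℝ) < ((2*(j'+1)+2:ℕ):ℝ) by push_cast; linarith)
    omega
  · -- β = true, β' = false : contradiction
    exfalso
    simp only [brI, brP, brk, brxi, brt, Bool.false_eq_true, if_false, if_true] at hxI hx
    push_cast at hxI hx
    rw [hx] at hxI
    have hA : 2*((j:ℝ)+1) + 1*a < 2*((j':ℝ)+2) + -1*y :=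
      phiM_lt_rev t (by linarith) (by linarith) hxI.2
    have hB : 2*((j':ℝ)+2) + -1*y ≤ 2*((j:ℝ)+1) + 1*b :=
      phiM_le_rev t (by linarith) (by linarith) hxI.1
    have n1 : 2*(j+1) < 2*(j'+2) := by
      exact_mod_cast (show ((2*(j+1):ℕ):ℝ) < ((2*(j'+2):ℕ):ℝ) by push_cast; linarith)
    have n2 : 2*(j'+2) < 2*(j+1) + 2 := by
      exact_mod_cast (show ((2*(j'+2):ℕ):ℝ) < ((2*(j+1)+2:ℕ):ℝ) by push_cast; linarith)
    omega
  · -- β = true, β' = true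
    simp only [brI, brP, brk, brxi, brt, if_true] at hxI hx
    push_cast at hxI hx
    rw [hx] at hxI
    have hA : 2*((j:ℝ)+1) + 1*a < 2*((j':ℝ)+1) + 1*y :=
      phiM_lt_rev t (by linarith) (by linarith) hxI.2
    have hB : 2*((j':ℝ)+1) + 1*y ≤ 2*((j:ℝ)+1) + 1*b :=
      phiM_le_rev t (by linarith) (by linarith) hxI.1
    have n1 : 2*(j+1) < 2*(j'+1) + 1 := by
      exact_mod_cast (show ((2*(j+1):ℕ):ℝ) < ((2*(j'+1)+1:ℕ):ℝ) by push_cast; linarith)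
    have n2 : 2*(j'+1) < 2*(j+1) + 1 := by
      exact_mod_cast (show ((2*(j'+1):ℕ):ℝ) < ((2*(j+1)+1:ℕ):ℝ) by push_cast; linarith)
    have hjj : j' = j := by omega
    subst hjj
    exact ⟨rfl, by constructor <;> linarith⟩

lemma decomp {a b : ℝ} (ha : 0 ≤ a) (hab : a ≤ b) (hb : b ≤ 1) :
    ecfR ⁻¹' (Set.Ioc a b) ∩ ECFdom = ⋃ i : Idx, (brI i a b ∩ ECFdom) := by
  ext x
  constructor
  · rintro ⟨hpre, hdom⟩
    obtain ⟨i, hirr, h01, hx⟩ := key hdom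
    refine Set.mem_iUnion.2 ⟨i, ?_, hdom⟩
    rw [hx]
    exact brP_mem_brI ha hb hpre h01
  · intro hx
    obtain ⟨i, hxi, hdom⟩ := Set.mem_iUnion.1 hx
    obtain ⟨i', hirr, h01, hxeq⟩ := key hdom
    obtain ⟨_, hy⟩ := unique ha hab hb hxi h01 hxeq
    exact ⟨hy, hdom⟩

lemma brE_disjoint {a b : ℝ} (ha : 0 ≤ a) (hab : a ≤ b) (hb : b ≤ 1) :
    Pairwise (Function.onFun Disjoint (fun i : Idx => brI i a b ∩ ECFdom)) := by
  intro i i' hne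
  rw [Function.onFun, Set.disjoint_left]
  rintro x ⟨hxi, hdom⟩ ⟨hxi', _⟩
  obtain ⟨i'', _, h01, hxeq⟩ := key hdom
  have h1 := (unique ha hab hb hxi h01 hxeq).1
  have h2 := (unique ha hab hb hxi' h01 hxeq).1
  exact hne (h1.symm.trans h2)

end ECFaux

namespace ECFaux

lemma measurable_ecfT : Measurable ecfT := by
  have hfl : Measurable fun x : ℝ => ⌊1/x⌋ := by
    apply Measurable.floor
    exact measurable_const.div measurable_id
  have hK : Measurable fun x : ℝ => ((ecfK x : ℕ) : ℝ) := by
    have : (fun x : ℝ => ((ecfK x : ℕ) : ℝ))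
        = (fun z : ℤ => (((z + 1).toNat / 2 : ℕ) : ℝ)) ∘ (fun x : ℝ => ⌊1/x⌋) := rfl
    rw [this]
    exact measurable_from_top.comp hfl
  have hXi : Measurable fun x : ℝ => ((ecfXi x : ℤ) : ℝ) := by
    have : (fun x : ℝ => ((ecfXi x : ℤ) : ℝ))
        = (fun z : ℤ => (((if z % 2 = 0 then 1 else -1 : ℤ)) : ℝ)) ∘ (fun x : ℝ => ⌊1/x⌋) := rfl
    rw [this]
    exact measurable_from_top.comp hfl
  have : ecfT = fun x => ((ecfXi x : ℤ) : ℝ) * (1/x - 2 * ((ecfK x : ℕ) : ℝ)) := rfl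
  rw [this]
  apply hXi.mul
  apply Measurable.sub
  · exact measurable_const.div measurable_id
  · exact (measurable_const.mul hK)

lemma measurable_iterT (n : ℕ) : Measurable (ecfT^[n]) := measurable_ecfT.iterate n

lemma measurable_ecfTau : Measurable ecfTau := by
  apply measurable_to_countable'
  intro n
  have hA : ∀ j : ℕ, MeasurableSet {x : ℝ | ecfT^[j] x ∈ Set.Ioc (0:ℝ) (1/2)} :=
    fun j => (measurable_iterT j) measurableSet_Ioc
  have hdesc : ecfTau ⁻¹' {n} =
      ({x : ℝ | ecfT^[n] x ∈ Set.Ioc (0:ℝ) (1/2)} ∩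
        ⋂ j ∈ Finset.range n, {x : ℝ | ecfT^[j] x ∈ Set.Ioc (0:ℝ) (1/2)}ᶜ) ∪
      ({x : ℝ | n = 0} ∩ ⋂ j : ℕ, {x : ℝ | ecfT^[j] x ∈ Set.Ioc (0:ℝ) (1/2)}ᶜ) := by
    ext x
    simp only [Set.mem_preimage, Set.mem_singleton_iff, Set.mem_union, Set.mem_inter_iff,
      Set.mem_iInter, Set.mem_compl_iff, Set.mem_setOf_eq, Finset.mem_range]
    constructor
    · intro h
      by_cases hne : ({j : ℕ | ecfT^[j] x ∈ Set.Ioc (0:ℝ) (1/2)}).Nonempty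
      · left
        have hmem := Nat.sInf_mem hne
        rw [show sInf {j : ℕ | ecfT^[j] x ∈ Set.Ioc (0:ℝ) (1/2)} = ecfTau x from rfl, h] at hmem
        refine ⟨hmem, fun j hj hmemj => ?_⟩
        have := Nat.sInf_le (s := {j : ℕ | ecfT^[j] x ∈ Set.Ioc (0:ℝ) (1/2)}) hmemj
        rw [show sInf {j : ℕ | ecfT^[j] x ∈ Set.Ioc (0:ℝ) (1/2)} = ecfTau x from rfl, h] at this
        omega
      · right
        rw [Set.not_nonempty_iff_eq_empty] at hne
        constructor
        · rw [← h, show ecfTau x = sInf {j : ℕ | ecfT^[j] x ∈ Set.Ioc (0:ℝ) (1/2)} from rfl, hne,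
            Nat.sInf_empty]
        · intro j hj
          have : j ∈ ({j : ℕ | ecfT^[j] x ∈ Set.Ioc (0:ℝ) (1/2)} : Set ℕ) := hj
          rw [hne] at this
          exact this
    · rintro (⟨hmem, hmin⟩ | ⟨hn0, hall⟩)
      · apply le_antisymm
        · exact Nat.sInf_le hmem
        · by_contra hc
          push_neg at hc
          have hinf := Nat.sInf_mem (⟨n, hmem⟩ : ({j : ℕ | ecfT^[j] x ∈ Set.Ioc (0:ℝ) (1/2)}).Nonempty)
          exact hmin _ hc hinf
      · have : {j : ℕ | ecfT^[j] x ∈ Set.Ioc (0:ℝ) (1/2)} = ∅ := by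
          ext j; simp only [Set.mem_setOf_eq, Set.mem_empty_iff_false, iff_false]
          exact hall j
        rw [show ecfTau x = sInf {j : ℕ | ecfT^[j] x ∈ Set.Ioc (0:ℝ) (1/2)} from rfl, this,
          Nat.sInf_empty, hn0]
  rw [hdesc]
  apply MeasurableSet.union
  · exact (hA n).inter (MeasurableSet.biInter (Set.to_countable _) (fun j _ => (hA j).compl))
  · apply MeasurableSet.inter
    · by_cases h : n = 0 <;> simp [h]
    · exact MeasurableSet.iInter (fun j => (hA j).compl)

lemma measurable_ecfR : Measurable ecfR := by
  have h1 : Measurable (fun p : ℝ × ℕ => ecfT^[p.2 + 1] p.1) :=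
    measurable_from_prod_countable_left (fun n => measurable_iterT (n+1))
  have : ecfR = (fun p : ℝ × ℕ => ecfT^[p.2 + 1] p.1) ∘ (fun x => (x, ecfTau x)) := rfl
  rw [this]
  exact h1.comp (measurable_id.prodMk measurable_ecfTau)

lemma measurableSet_irr : MeasurableSet {x : ℝ | Irrational x} := by
  have : {x : ℝ | Irrational x} = (Set.range ((↑) : ℚ → ℝ))ᶜ := rfl
  rw [this]
  exact ((Set.countable_range _).measurableSet).compl

lemma measurableSet_ECFdom : MeasurableSet ECFdom := by
  have : ECFdom = Set.Ioc (0:ℝ) 1 ∩ {x : ℝ | Irrational x} := rfl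
  rw [this]
  exact measurableSet_Ioc.inter measurableSet_irr

lemma ecfMu_null {S : Set ℝ} (h : volume (S ∩ Set.Ioc (0:ℝ) 1) = 0) : ecfMu S = 0 := by
  have h1 : (volume.restrict (Set.Ioc (0:ℝ) 1)) S = 0 := by
    rw [Measure.restrict_apply' measurableSet_Ioc]; exact h
  exact withDensity_absolutelyContinuous _ _ h1

lemma ecfMu_rat_null : ecfMu {x : ℝ | ¬ Irrational x} = 0 := by
  apply ecfMu_null
  apply measure_mono_null (Set.inter_subset_left)
  have : {x : ℝ | ¬ Irrational x} = Set.range ((↑) : ℚ → ℝ) := by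
    ext x; simp [Irrational]
  rw [this]
  exact (Set.countable_range _).measure_zero _

lemma ecfMu_singleton_null (z : ℝ) : ecfMu {z} = 0 := by
  apply ecfMu_null
  apply measure_mono_null (Set.inter_subset_left)
  exact measure_singleton z

lemma ecfMu_compl_dom_null : ecfMu ECFdomᶜ = 0 := by
  apply ecfMu_null
  apply measure_mono_null (t := {x : ℝ | ¬ Irrational x})
  · rintro x ⟨hc, hIoc⟩
    simp only [Set.mem_compl_iff, ECFdom, Set.mem_setOf_eq, not_and] at hc
    exact hc hIoc
  · have : {x : ℝ | ¬ Irrational x} = Set.range ((↑) : ℚ → ℝ) := by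
      ext x; simp [Irrational]
    rw [this]
    exact (Set.countable_range _).measure_zero _

lemma ecfMu_Ioc {a b : ℝ} (ha : 0 ≤ a) (hab : a ≤ b) (hb : b ≤ 1) :
    ecfMu (Set.Ioc a b) = ENNReal.ofReal ((Fm b - Fm a)/Real.log 3) := by
  have hsub : Set.Ioc a b ⊆ Set.Ioc (0:ℝ) 1 := Set.Ioc_subset_Ioc ha hb
  rw [ecfMu, withDensity_apply _ measurableSet_Ioc, Measure.restrict_restrict measurableSet_Ioc,
    Set.inter_eq_self_of_subset_left hsub]
  have hcont : ContinuousOn (fun x : ℝ => (1/Real.log 3) * (1/(3-x) + 1/(1+x))) (Set.Icc a b) := by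
    apply ContinuousOn.mul continuousOn_const
    apply ContinuousOn.add
    · apply ContinuousOn.div continuousOn_const
      · exact (continuous_const.sub continuous_id).continuousOn
      · intro x hx; simp only [Set.mem_Icc] at hx; intro hc; linarith [hx.2]
    · apply ContinuousOn.div continuousOn_const
      · exact (continuous_const.add continuous_id).continuousOn
      · intro x hx; simp only [Set.mem_Icc] at hx; intro hc; linarith [hx.1]
  have hint : IntegrableOn (fun x : ℝ => (1/Real.log 3) * (1/(3-x) + 1/(1+x))) (Set.Ioc a b) volume :=
    (hcont.integrableOn_Icc).mono_set Set.Ioc_subset_Icc_self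
  rw [← ofReal_integral_eq_lintegral_ofReal hint]
  · congr 1
    rw [← intervalIntegral.integral_of_le hab]
    have hderiv : ∀ x ∈ Set.uIcc a b,
        HasDerivAt (fun y : ℝ => (1/Real.log 3) * (Real.log (1+y) - Real.log (3-y)))
          ((1/Real.log 3) * (1/(3-x) + 1/(1+x))) x := by
      intro x hx
      rw [Set.uIcc_of_le hab] at hx
      have hx1 : (0:ℝ) < 1+x := by linarith [hx.1]
      have hx3 : (0:ℝ) < 3-x := by linarith [hx.2]
      have h1 : HasDerivAt (fun y : ℝ => Real.log (1+y)) (1/(1+x)) x := by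
        have := ((hasDerivAt_id x).const_add 1).log hx1.ne'
        simpa using this
      have h2 : HasDerivAt (fun y : ℝ => Real.log (3-y)) (-1/(3-x)) x := by
        have := ((hasDerivAt_id x).const_sub 3).log hx3.ne'
        simpa using this
      have := (h1.sub h2).const_mul (1/Real.log 3)
      refine this.congr_deriv ?_
      ring
    rw [intervalIntegral.integral_eq_sub_of_hasDerivAt hderiv]
    · simp only [Fm]
      field_simp
    · apply ContinuousOn.intervalIntegrable
      rwa [Set.uIcc_of_le hab]
  · filter_upwards [ae_restrict_mem measurableSet_Ioc] with x hx
    have hx1 : (0:ℝ) < 1+x := by linarith [hx.1, ha]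
    have hx3 : (0:ℝ) < 3-x := by linarith [hx.2, hb]
    have hlog : (0:ℝ) < Real.log 3 := by
      apply Real.log_pos; norm_num
    positivity

lemma ecfMu_Ico_eq_Ioc (lo hi : ℝ) : ecfMu (Set.Ico lo hi) = ecfMu (Set.Ioc lo hi) := by
  apply measure_congr
  rw [MeasureTheory.ae_eq_set]
  constructor
  · apply measure_mono_null _ (ecfMu_singleton_null lo)
    rintro x ⟨⟨h1, h2⟩, h3⟩
    simp only [Set.mem_Ioc, not_and, not_le] at h3
    by_contra hne
    have hlt : lo < x := lt_of_le_of_ne h1 (Ne.symm (by simpa using hne))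
    linarith [h3 hlt]
  · apply measure_mono_null _ (ecfMu_singleton_null hi)
    rintro x ⟨⟨h1, h2⟩, h3⟩
    simp only [Set.mem_Ico, not_and, not_lt] at h3
    have := h3 h1.le
    simp only [Set.mem_singleton_iff]
    linarith [h2, this]

end ECFaux

namespace ECFaux

lemma brI_subset_Ioc01 {i : Idx} {a b : ℝ} (ha : 0 ≤ a) (hab : a ≤ b) (hb : b ≤ 1) :
    brI i a b ⊆ Set.Ioc (0:ℝ) 1 := by
  intro x hx
  obtain ⟨h1, h2⟩ := brI_t_bounds ha hab hb hx
  set t := brt i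
  have ht1 : (0:ℝ) < (t:ℝ)+1 := by positivity
  have ht2 : (0:ℝ) < (t:ℝ)+2 := by positivity
  constructor
  · have : (0:ℝ) ≤ (t:ℝ)/((t:ℝ)+1) := by positivity
    linarith
  · have : ((t:ℝ)+1)/((t:ℝ)+2) ≤ 1 := by
      rw [div_le_one ht2]; linarith
    linarith

lemma brP_bounds {i : Idx} {a b : ℝ} (ha : 0 ≤ a) (hab : a ≤ b) (hb : b ≤ 1) :
    0 ≤ brLo i a b ∧ brLo i a b ≤ brHi i a b ∧ brHi i a b ≤ 1 := by
  obtain ⟨β, j, t⟩ := i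
  have hjr : (0:ℝ) ≤ (j:ℝ) := Nat.cast_nonneg j
  have ht1 : (0:ℝ) < (t:ℝ)+1 := by positivity
  have ht2 : (0:ℝ) < (t:ℝ)+2 := by positivity
  have hub1 : ((t:ℝ)+1)/((t:ℝ)+2) ≤ 1 := by rw [div_le_one ht2]; linarith
  have hlb0 : (0:ℝ) ≤ (t:ℝ)/((t:ℝ)+1) := by positivity
  cases β
  · simp only [brLo, brHi, brP, brk, brxi, brt, Bool.false_eq_true, if_false]
    push_cast
    refine ⟨?_, ?_, ?_⟩
    · linarith [phiM_lb t (by linarith : (1:ℝ) ≤ 2*((j:ℝ)+2) + -1*a)]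
    · exact phiM_le t (by linarith) (by linarith)
    · linarith [phiM_ub t (by linarith : (2:ℝ) ≤ 2*((j:ℝ)+2) + -1*b)]
  · simp only [brLo, brHi, brP, brk, brxi, brt, if_true]
    push_cast
    refine ⟨?_, ?_, ?_⟩
    · linarith [phiM_lb t (by linarith : (1:ℝ) ≤ 2*((j:ℝ)+1) + 1*b)]
    · exact phiM_le t (by linarith) (by linarith)
    · linarith [phiM_ub t (by linarith : (2:ℝ) ≤ 2*((j:ℝ)+1) + 1*a)]

lemma ecfMu_brE {i : Idx} {a b : ℝ} (ha : 0 ≤ a) (hab : a ≤ b) (hb : b ≤ 1) :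
    ecfMu (brI i a b ∩ ECFdom) = ENNReal.ofReal ((Fm (brHi i a b) - Fm (brLo i a b))/Real.log 3) := by
  have hdiffnull : ecfMu (brI i a b \ ECFdom) = 0 := by
    apply measure_mono_null (t := {x : ℝ | ¬ Irrational x})
    · rintro x ⟨hxI, hxc⟩
      intro hirr
      exact hxc ⟨brI_subset_Ioc01 ha hab hb hxI, hirr⟩
    · exact ecfMu_rat_null
  have hsplit := measure_inter_add_diff (μ := ecfMu) (brI i a b) measurableSet_ECFdom
  have hfull : ecfMu (brI i a b ∩ ECFdom) = ecfMu (brI i a b) := by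
    rw [← hsplit, hdiffnull, add_zero]
  rw [hfull]
  obtain ⟨hlo0, hlohi, hhi1⟩ := brP_bounds (i := i) ha hab hb
  have hIoc : ecfMu (brI i a b) = ecfMu (Set.Ioc (brLo i a b) (brHi i a b)) := by
    obtain ⟨β, j, t⟩ := i
    cases β
    · simp only [brI, brLo, brHi, Bool.false_eq_true, if_false]
    · simp only [brI, brLo, brHi, if_true]
      exact ecfMu_Ico_eq_Ioc _ _
  rw [hIoc, ecfMu_Ioc hlo0 hlohi hhi1]

end ECFaux

namespace ECFaux

def Mreal (i : Idx) (a b : ℝ) : ℝ := (Fm (brHi i a b) - Fm (brLo i a b))/Real.log 3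
def vv1 (β : Bool) (j : ℕ) (a b : ℝ) : ℝ := if β then 2*((j:ℝ)+1)+a else 2*((j:ℝ)+2)-b
def vv2 (β : Bool) (j : ℕ) (a b : ℝ) : ℝ := if β then 2*((j:ℝ)+1)+b else 2*((j:ℝ)+2)-a
def Gt (v1 v2 : ℝ) (t : ℕ) : ℝ :=
  (Real.log ((2*(t:ℝ)+1)*v1 - (2*(t:ℝ)-1)) - Real.log ((2*(t:ℝ)+1)*v2 - (2*(t:ℝ)-1)))/Real.log 3

lemma hlog3 : (0:ℝ) < Real.log 3 := Real.log_pos (by norm_num)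

lemma vv_facts {β : Bool} {j : ℕ} {a b : ℝ} (ha : 0 ≤ a) (hab : a ≤ b) (hb : b ≤ 1) :
    2 ≤ vv1 β j a b ∧ vv1 β j a b ≤ vv2 β j a b := by
  have hjr : (0:ℝ) ≤ (j:ℝ) := Nat.cast_nonneg j
  cases β <;> simp only [vv1, vv2, Bool.false_eq_true, if_false, if_true] <;>
    constructor <;> linarith

lemma Fm_mono {x y : ℝ} (hx : -1 < x) (hxy : x ≤ y) (hy : y < 3) : Fm x ≤ Fm y := by
  have h1 : Real.log (1+x) ≤ Real.log (1+y) := Real.log_le_log (by linarith) (by linarith)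
  have h2 : Real.log (3-y) ≤ Real.log (3-x) := Real.log_le_log (by linarith) (by linarith)
  rw [Fm, Fm]; linarith

lemma Mreal_nonneg {i : Idx} {a b : ℝ} (ha : 0 ≤ a) (hab : a ≤ b) (hb : b ≤ 1) :
    0 ≤ Mreal i a b := by
  obtain ⟨hlo0, hlohi, hhi1⟩ := brP_bounds (i := i) ha hab hb
  apply div_nonneg _ hlog3.le
  have := Fm_mono (x := brLo i a b) (y := brHi i a b) (by linarith) hlohi (by linarith)
  linarith

lemma Fm_phi (t : ℕ) {w : ℝ} (hw : 2 ≤ w) :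
    Fm (phiM t w) = Real.log ((2*(t:ℝ)+1)*w - (2*(t:ℝ)-1))
      - Real.log ((2*(t:ℝ)+3)*w - (2*(t:ℝ)+1)) := by
  have htr : (0:ℝ) ≤ (t:ℝ) := Nat.cast_nonneg t
  have hD := phiM_den_pos t (by linarith : (1:ℝ) ≤ w)
  have h1 : (0:ℝ) < (2*(t:ℝ)+1)*w - (2*(t:ℝ)-1) := by nlinarith
  have h2 : (0:ℝ) < (2*(t:ℝ)+3)*w - (2*(t:ℝ)+1) := by nlinarith
  have e1 : 1 + phiM t w = ((2*(t:ℝ)+1)*w - (2*(t:ℝ)-1))/(((t:ℝ)+1)*w - t) := by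
    rw [phiM, eq_div_iff hD.ne', add_mul, div_mul_cancel₀ _ hD.ne']; ring
  have e2 : 3 - phiM t w = ((2*(t:ℝ)+3)*w - (2*(t:ℝ)+1))/(((t:ℝ)+1)*w - t) := by
    rw [phiM, eq_div_iff hD.ne', sub_mul, div_mul_cancel₀ _ hD.ne']; ring
  rw [Fm, e1, e2, Real.log_div h1.ne' hD.ne', Real.log_div h2.ne' hD.ne']
  ring

lemma Mreal_eq {β : Bool} {j t : ℕ} {a b : ℝ} (ha : 0 ≤ a) (hab : a ≤ b) (hb : b ≤ 1) :
    Mreal (β, j, t) a b = Gt (vv1 β j a b) (vv2 β j a b) t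
      - Gt (vv1 β j a b) (vv2 β j a b) (t+1) := by
  obtain ⟨h2v1, h12⟩ := vv_facts (β := β) (j := j) ha hab hb
  have h2v2 : 2 ≤ vv2 β j a b := le_trans h2v1 h12
  have hjr : (0:ℝ) ≤ (j:ℝ) := Nat.cast_nonneg j
  have hcast : ((t+1:ℕ):ℝ) = (t:ℝ)+1 := by push_cast; ring
  have A1 : (2*((t:ℝ)+1)+1)*(vv1 β j a b) - (2*((t:ℝ)+1)-1)
      = (2*(t:ℝ)+3)*(vv1 β j a b) - (2*(t:ℝ)+1) := by ring
  have A2 : (2*((t:ℝ)+1)+1)*(vv2 β j a b) - (2*((t:ℝ)+1)-1)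
      = (2*(t:ℝ)+3)*(vv2 β j a b) - (2*(t:ℝ)+1) := by ring
  cases β
  · have hHi : brHi (false, j, t) a b = phiM t (vv1 false j a b) := by
      simp only [brHi, brP, brk, brxi, brt, Bool.false_eq_true, if_false, vv1]
      congr 1; push_cast; ring
    have hLo : brLo (false, j, t) a b = phiM t (vv2 false j a b) := by
      simp only [brLo, brP, brk, brxi, brt, Bool.false_eq_true, if_false, vv2]
      congr 1; push_cast; ring
    rw [Mreal, hHi, hLo, Fm_phi t h2v1, Fm_phi t h2v2, Gt, Gt, hcast, A1, A2]
    ring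
  · have hHi : brHi (true, j, t) a b = phiM t (vv1 true j a b) := by
      simp only [brHi, brP, brk, brxi, brt, if_true, vv1]
      congr 1; push_cast; ring
    have hLo : brLo (true, j, t) a b = phiM t (vv2 true j a b) := by
      simp only [brLo, brP, brk, brxi, brt, if_true, vv2]
      congr 1; push_cast; ring
    rw [Mreal, hHi, hLo, Fm_phi t h2v1, Fm_phi t h2v2, Gt, Gt, hcast, A1, A2]
    ring

lemma telesum {G : ℕ → ℝ} {L : ℝ} (hnn : ∀ n, 0 ≤ G n - G (n+1))
    (hlim : Tendsto G atTop (nhds L)) : HasSum (fun n => G n - G (n+1)) (G 0 - L) := by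
  rw [hasSum_iff_tendsto_nat_of_nonneg hnn]
  have heq : (fun n => ∑ i ∈ Finset.range n, (G i - G (i+1))) = fun n => G 0 - G n := by
    funext n; exact Finset.sum_range_sub' G n
  rw [heq]
  exact tendsto_const_nhds.sub hlim

lemma lin_atTop : Tendsto (fun t : ℕ => 2*(t:ℝ)+1) atTop atTop := by
  apply tendsto_atTop_add_const_right
  exact Tendsto.const_mul_atTop two_pos tendsto_natCast_atTop_atTop

lemma e_lim : Tendsto (fun t : ℕ => (2*(t:ℝ)-1)/(2*(t:ℝ)+1)) atTop (nhds 1) := by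
  have heq : (fun t : ℕ => (2*(t:ℝ)-1)/(2*(t:ℝ)+1)) = fun t : ℕ => 1 - 2/(2*(t:ℝ)+1) := by
    funext t
    have hne : (2*(t:ℝ)+1) ≠ 0 := by positivity
    field_simp
    ring
  rw [heq]
  have h2 := Tendsto.div_atTop (tendsto_const_nhds : Tendsto (fun _ : ℕ => (2:ℝ)) atTop (nhds 2)) lin_atTop
  simpa using tendsto_const_nhds.sub h2

lemma Gt_pos_arg {v : ℝ} (hv : 2 ≤ v) (t : ℕ) : (0:ℝ) < (2*(t:ℝ)+1)*v - (2*(t:ℝ)-1) := by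
  nlinarith [Nat.cast_nonneg (α := ℝ) t]

lemma G_lim {v1 v2 : ℝ} (h1 : 2 ≤ v1) (h2 : 2 ≤ v2) :
    Tendsto (Gt v1 v2) atTop (nhds ((Real.log (v1-1) - Real.log (v2-1))/Real.log 3)) := by
  have hfun : Gt v1 v2 = fun t : ℕ =>
      Real.log ((v1 - (2*(t:ℝ)-1)/(2*(t:ℝ)+1))/(v2 - (2*(t:ℝ)-1)/(2*(t:ℝ)+1)))/Real.log 3 := by
    funext t
    have hden : (0:ℝ) < 2*(t:ℝ)+1 := by positivity
    have e1 := Gt_pos_arg h1 t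
    have e2 := Gt_pos_arg h2 t
    have helt : (2*(t:ℝ)-1)/(2*(t:ℝ)+1) < 1 := by rw [div_lt_one hden]; linarith
    have hv2e : (0:ℝ) < v2 - (2*(t:ℝ)-1)/(2*(t:ℝ)+1) := by linarith
    have harg : ((2*(t:ℝ)+1)*v1 - (2*(t:ℝ)-1))/((2*(t:ℝ)+1)*v2 - (2*(t:ℝ)-1))
        = (v1 - (2*(t:ℝ)-1)/(2*(t:ℝ)+1))/(v2 - (2*(t:ℝ)-1)/(2*(t:ℝ)+1)) := by
      rw [div_eq_div_iff e2.ne' hv2e.ne']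
      field_simp
    rw [Gt, ← Real.log_div e1.ne' e2.ne', harg]
  rw [hfun]
  have hv1e : Tendsto (fun t : ℕ => v1 - (2*(t:ℝ)-1)/(2*(t:ℝ)+1)) atTop (nhds (v1 - 1)) :=
    tendsto_const_nhds.sub e_lim
  have hv2e : Tendsto (fun t : ℕ => v2 - (2*(t:ℝ)-1)/(2*(t:ℝ)+1)) atTop (nhds (v2 - 1)) :=
    tendsto_const_nhds.sub e_lim
  have hne2 : v2 - 1 ≠ 0 := by linarith
  have hratio := Tendsto.div hv1e hv2e hne2
  have hposlim : (v1-1)/(v2-1) ≠ 0 := by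
    apply ne_of_gt
    apply div_pos <;> linarith
  have hlog := Tendsto.log hratio hposlim
  rw [Real.log_div (by linarith : v1 - 1 ≠ 0) (by linarith : v2 - 1 ≠ 0)] at hlog
  exact hlog.div_const _

lemma hasSum_t (β : Bool) (j : ℕ) {a b : ℝ} (ha : 0 ≤ a) (hab : a ≤ b) (hb : b ≤ 1) :
    HasSum (fun t : ℕ => Mreal (β, j, t) a b)
      ((Real.log (vv1 β j a b + 1) - Real.log (vv2 β j a b + 1))/Real.log 3
        - (Real.log (vv1 β j a b - 1) - Real.log (vv2 β j a b - 1))/Real.log 3) := by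
  obtain ⟨h2v1, h12⟩ := vv_facts (β := β) (j := j) ha hab hb
  have h2v2 : 2 ≤ vv2 β j a b := le_trans h2v1 h12
  have hnn : ∀ n : ℕ, 0 ≤ Gt (vv1 β j a b) (vv2 β j a b) n - Gt (vv1 β j a b) (vv2 β j a b) (n+1) := by
    intro n
    rw [← Mreal_eq ha hab hb]
    exact Mreal_nonneg ha hab hb
  have hh := telesum hnn (G_lim h2v1 h2v2)
  have h0 : Gt (vv1 β j a b) (vv2 β j a b) 0
      = (Real.log (vv1 β j a b + 1) - Real.log (vv2 β j a b + 1))/Real.log 3 := by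
    rw [Gt]
    norm_num
  rw [h0] at hh
  have hfun : (fun t : ℕ => Mreal (β, j, t) a b)
      = fun t => Gt (vv1 β j a b) (vv2 β j a b) t - Gt (vv1 β j a b) (vv2 β j a b) (t+1) :=
    funext fun t => Mreal_eq ha hab hb
  rw [hfun]
  exact hh

lemma loglim2 {p q : ℝ} (hp : 0 ≤ p) (hq : 0 ≤ q) :
    Tendsto (fun n : ℕ => (Real.log (2*(n:ℝ)+1+p) - Real.log (2*(n:ℝ)+1+q))/Real.log 3)
      atTop (nhds 0) := by
  have hfun : (fun n : ℕ => (Real.log (2*(n:ℝ)+1+p) - Real.log (2*(n:ℝ)+1+q))/Real.log 3)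
      = fun n : ℕ => Real.log ((1 + p/(2*(n:ℝ)+1))/(1 + q/(2*(n:ℝ)+1)))/Real.log 3 := by
    funext n
    have hd : (0:ℝ) < 2*(n:ℝ)+1 := by positivity
    have e1 : (0:ℝ) < 2*(n:ℝ)+1+p := by linarith
    have e2 : (0:ℝ) < 2*(n:ℝ)+1+q := by linarith
    have h1' : (0:ℝ) < 1 + q/(2*(n:ℝ)+1) := by positivity
    have harg : (2*(n:ℝ)+1+p)/(2*(n:ℝ)+1+q) = (1 + p/(2*(n:ℝ)+1))/(1 + q/(2*(n:ℝ)+1)) := by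
      rw [div_eq_div_iff e2.ne' h1'.ne']
      field_simp
    rw [← Real.log_div e1.ne' e2.ne', harg]
  rw [hfun]
  have hp' : Tendsto (fun n : ℕ => p/(2*(n:ℝ)+1)) atTop (nhds 0) :=
    Tendsto.div_atTop tendsto_const_nhds lin_atTop
  have hq' : Tendsto (fun n : ℕ => q/(2*(n:ℝ)+1)) atTop (nhds 0) :=
    Tendsto.div_atTop tendsto_const_nhds lin_atTop
  have hnum : Tendsto (fun n : ℕ => 1 + p/(2*(n:ℝ)+1)) atTop (nhds 1) := by
    simpa using tendsto_const_nhds.add hp'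
  have hden : Tendsto (fun n : ℕ => 1 + q/(2*(n:ℝ)+1)) atTop (nhds 1) := by
    simpa using tendsto_const_nhds.add hq'
  have hratio := Tendsto.div hnum hden one_ne_zero
  have hlog := Tendsto.log (by simpa using hratio) one_ne_zero
  rw [Real.log_one] at hlog
  simpa using hlog.div_const (Real.log 3)

lemma hasSum_j_true {a b : ℝ} (ha : 0 ≤ a) (hab : a ≤ b) (hb : b ≤ 1) :
    HasSum (fun j : ℕ => (Real.log (vv1 true j a b + 1) - Real.log (vv2 true j a b + 1))/Real.log 3
      - (Real.log (vv1 true j a b - 1) - Real.log (vv2 true j a b - 1))/Real.log 3)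
      ((Real.log (1+b) - Real.log (1+a))/Real.log 3) := by
  set P : ℕ → ℝ := fun j => (Real.log (2*(j:ℝ)+1+b) - Real.log (2*(j:ℝ)+1+a))/Real.log 3 with hP
  have hPj : (fun j : ℕ => (Real.log (vv1 true j a b + 1) - Real.log (vv2 true j a b + 1))/Real.log 3
      - (Real.log (vv1 true j a b - 1) - Real.log (vv2 true j a b - 1))/Real.log 3)
      = fun j => P j - P (j+1) := by
    funext j
    simp only [hP, vv1, vv2, if_true]
    push_cast
    rw [show 2*((j:ℝ)+1)+a+1 = 2*((j:ℝ)+1)+1+a by ring,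
        show 2*((j:ℝ)+1)+b+1 = 2*((j:ℝ)+1)+1+b by ring,
        show 2*((j:ℝ)+1)+a-1 = 2*(j:ℝ)+1+a by ring,
        show 2*((j:ℝ)+1)+b-1 = 2*(j:ℝ)+1+b by ring]
    ring
  rw [hPj]
  have hnn : ∀ j : ℕ, 0 ≤ P j - P (j+1) := by
    intro j
    have h := (hasSum_t true j ha hab hb).nonneg (fun t => Mreal_nonneg ha hab hb)
    rw [congrFun hPj j] at h
    exact h
  have hlim : Tendsto P atTop (nhds 0) := loglim2 (le_trans ha hab) ha
  have hh := telesum hnn hlim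
  rw [sub_zero] at hh
  have hP0 : P 0 = (Real.log (1+b) - Real.log (1+a))/Real.log 3 := by
    simp only [hP]
    norm_num
  rw [hP0] at hh
  exact hh

lemma hasSum_j_false {a b : ℝ} (ha : 0 ≤ a) (hab : a ≤ b) (hb : b ≤ 1) :
    HasSum (fun j : ℕ => (Real.log (vv1 false j a b + 1) - Real.log (vv2 false j a b + 1))/Real.log 3
      - (Real.log (vv1 false j a b - 1) - Real.log (vv2 false j a b - 1))/Real.log 3)
      ((Real.log (3-a) - Real.log (3-b))/Real.log 3) := by
  set Q : ℕ → ℝ := fun j => (Real.log (2*(j:ℝ)+3-a) - Real.log (2*(j:ℝ)+3-b))/Real.log 3 with hQ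
  have hQj : (fun j : ℕ => (Real.log (vv1 false j a b + 1) - Real.log (vv2 false j a b + 1))/Real.log 3
      - (Real.log (vv1 false j a b - 1) - Real.log (vv2 false j a b - 1))/Real.log 3)
      = fun j => Q j - Q (j+1) := by
    funext j
    simp only [hQ, vv1, vv2, Bool.false_eq_true, if_false]
    push_cast
    rw [show 2*((j:ℝ)+2)-b+1 = 2*((j:ℝ)+1)+3-b by ring,
        show 2*((j:ℝ)+2)-a+1 = 2*((j:ℝ)+1)+3-a by ring,
        show 2*((j:ℝ)+2)-b-1 = 2*(j:ℝ)+3-b by ring,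
        show 2*((j:ℝ)+2)-a-1 = 2*(j:ℝ)+3-a by ring]
    ring
  rw [hQj]
  have hnn : ∀ j : ℕ, 0 ≤ Q j - Q (j+1) := by
    intro j
    have h := (hasSum_t false j ha hab hb).nonneg (fun t => Mreal_nonneg ha hab hb)
    rw [congrFun hQj j] at h
    exact h
  have hlim : Tendsto Q atTop (nhds 0) := by
    have h2 := loglim2 (p := 2-a) (q := 2-b) (by linarith) (by linarith)
    have : (fun n : ℕ => (Real.log (2*(n:ℝ)+1+(2-a)) - Real.log (2*(n:ℝ)+1+(2-b)))/Real.log 3) = Q := by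
      funext n
      simp only [hQ]
      rw [show 2*(n:ℝ)+1+(2-a) = 2*(n:ℝ)+3-a by ring, show 2*(n:ℝ)+1+(2-b) = 2*(n:ℝ)+3-b by ring]
    rwa [this] at h2
  have hh := telesum hnn hlim
  rw [sub_zero] at hh
  have hQ0 : Q 0 = (Real.log (3-a) - Real.log (3-b))/Real.log 3 := by
    simp only [hQ]
    norm_num
  rw [hQ0] at hh
  exact hh

lemma series_total {a b : ℝ} (ha : 0 ≤ a) (hab : a ≤ b) (hb : b ≤ 1) :
    ∑' i : Idx, ENNReal.ofReal (Mreal i a b) = ENNReal.ofReal ((Fm b - Fm a)/Real.log 3) := by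
  have hsum_t : ∀ (β : Bool) (j : ℕ), HasSum (fun t : ℕ => Mreal (β, j, t) a b)
      ((Real.log (vv1 β j a b + 1) - Real.log (vv2 β j a b + 1))/Real.log 3
        - (Real.log (vv1 β j a b - 1) - Real.log (vv2 β j a b - 1))/Real.log 3) :=
    fun β j => hasSum_t β j ha hab hb
  have hinner : ∀ (β : Bool) (j : ℕ), ∑' t : ℕ, ENNReal.ofReal (Mreal (β, j, t) a b)
      = ENNReal.ofReal ((Real.log (vv1 β j a b + 1) - Real.log (vv2 β j a b + 1))/Real.log 3
        - (Real.log (vv1 β j a b - 1) - Real.log (vv2 β j a b - 1))/Real.log 3) := by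
    intro β j
    rw [← ENNReal.ofReal_tsum_of_nonneg (fun t => Mreal_nonneg ha hab hb) (hsum_t β j).summable,
      (hsum_t β j).tsum_eq]
  have houter_true : ∑' j : ℕ, ENNReal.ofReal
      ((Real.log (vv1 true j a b + 1) - Real.log (vv2 true j a b + 1))/Real.log 3
        - (Real.log (vv1 true j a b - 1) - Real.log (vv2 true j a b - 1))/Real.log 3)
      = ENNReal.ofReal ((Real.log (1+b) - Real.log (1+a))/Real.log 3) := by
    rw [← ENNReal.ofReal_tsum_of_nonneg
      (fun j => (hsum_t true j).nonneg (fun t => Mreal_nonneg ha hab hb))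
      (hasSum_j_true ha hab hb).summable, (hasSum_j_true ha hab hb).tsum_eq]
  have houter_false : ∑' j : ℕ, ENNReal.ofReal
      ((Real.log (vv1 false j a b + 1) - Real.log (vv2 false j a b + 1))/Real.log 3
        - (Real.log (vv1 false j a b - 1) - Real.log (vv2 false j a b - 1))/Real.log 3)
      = ENNReal.ofReal ((Real.log (3-a) - Real.log (3-b))/Real.log 3) := by
    rw [← ENNReal.ofReal_tsum_of_nonneg
      (fun j => (hsum_t false j).nonneg (fun t => Mreal_nonneg ha hab hb))
      (hasSum_j_false ha hab hb).summable, (hasSum_j_false ha hab hb).tsum_eq]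
  calc ∑' i : Idx, ENNReal.ofReal (Mreal i a b)
      = ∑' (β : Bool), ∑' (q : ℕ × ℕ), ENNReal.ofReal (Mreal (β, q) a b) := ENNReal.tsum_prod'
    _ = ∑' (β : Bool), ∑' (j : ℕ), ∑' (t : ℕ), ENNReal.ofReal (Mreal (β, j, t) a b) := by
        apply tsum_congr; intro β; exact ENNReal.tsum_prod'
    _ = ENNReal.ofReal ((Real.log (3-a) - Real.log (3-b))/Real.log 3)
        + ENNReal.ofReal ((Real.log (1+b) - Real.log (1+a))/Real.log 3) := by
        rw [tsum_bool]
        congr 1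
        · rw [← houter_false]; apply tsum_congr; intro j; exact hinner false j
        · rw [← houter_true]; apply tsum_congr; intro j; exact hinner true j
    _ = ENNReal.ofReal ((Fm b - Fm a)/Real.log 3) := by
        rw [← ENNReal.ofReal_add]
        · congr 1
          rw [← add_div]
          congr 1
          rw [Fm, Fm]
          ring
        · apply div_nonneg _ hlog3.le
          have := Real.log_le_log (x := 3-b) (y := 3-a) (by linarith) (by linarith)
          linarith
        · apply div_nonneg _ hlog3.le
          have := Real.log_le_log (x := 1+a) (y := 1+b) (by linarith) (by linarith)
          linarith

end ECFaux

namespace ECFaux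

lemma inter_dom_eq (S : Set ℝ) : ecfMu (S ∩ ECFdom) = ecfMu S := by
  have hsplit := measure_inter_add_diff (μ := ecfMu) S measurableSet_ECFdom
  have h0 : ecfMu (S \ ECFdom) = 0 :=
    measure_mono_null (fun x hx => hx.2) ecfMu_compl_dom_null
  rw [← hsplit, h0, add_zero]

lemma brI_measurable (i : Idx) (a b : ℝ) : MeasurableSet (brI i a b) := by
  rw [brI]
  split
  · exact measurableSet_Ico
  · exact measurableSet_Ioc

lemma main_Ioc {a b : ℝ} (ha : 0 ≤ a) (hab : a ≤ b) (hb : b ≤ 1) :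
    ecfMu (ecfR ⁻¹' (Set.Ioc a b) ∩ ECFdom) = ecfMu (Set.Ioc a b) := by
  rw [decomp ha hab hb,
    measure_iUnion (brE_disjoint ha hab hb)
      (fun i => (brI_measurable i a b).inter measurableSet_ECFdom)]
  calc ∑' i : Idx, ecfMu (brI i a b ∩ ECFdom)
      = ∑' i : Idx, ENNReal.ofReal (Mreal i a b) :=
        tsum_congr fun i => by rw [ecfMu_brE ha hab hb]; rfl
    _ = ENNReal.ofReal ((Fm b - Fm a)/Real.log 3) := series_total ha hab hb
    _ = ecfMu (Set.Ioc a b) := (ecfMu_Ioc ha hab hb).symm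

lemma ecfMu_Ioc01_compl : ecfMu (Set.Ioc (0:ℝ) 1)ᶜ = 0 := by
  apply ecfMu_null
  rw [Set.compl_inter_self]
  exact measure_empty

instance : IsFiniteMeasure ecfMu := by
  constructor
  have hsplit := measure_inter_add_diff (μ := ecfMu) Set.univ measurableSet_Ioc (t := Set.Ioc (0:ℝ) 1)
  have h1 : ecfMu (Set.univ \ Set.Ioc (0:ℝ) 1) = 0 := by
    apply measure_mono_null _ ecfMu_Ioc01_compl
    intro x hx; exact hx.2
  have h2 : Set.univ ∩ Set.Ioc (0:ℝ) 1 = Set.Ioc (0:ℝ) 1 := Set.univ_inter _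
  have := ecfMu_Ioc (le_refl (0:ℝ)) zero_le_one (le_refl (1:ℝ))
  calc ecfMu Set.univ = ecfMu (Set.univ ∩ Set.Ioc (0:ℝ) 1) + ecfMu (Set.univ \ Set.Ioc (0:ℝ) 1) :=
        hsplit.symm
    _ = ecfMu (Set.Ioc (0:ℝ) 1) := by rw [h1, h2, add_zero]
    _ < ⊤ := by rw [this]; exact ENNReal.ofReal_lt_top

lemma Ioc_measure_eq_trunc (l u : ℝ) :
    ecfMu (Set.Ioc l u) = ecfMu (Set.Ioc (max l 0) (min u 1)) := by
  have hsplit := measure_inter_add_diff (μ := ecfMu) (Set.Ioc l u) measurableSet_Ioc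
    (t := Set.Ioc (0:ℝ) 1)
  have h1 : ecfMu (Set.Ioc l u \ Set.Ioc (0:ℝ) 1) = 0 := by
    apply measure_mono_null _ ecfMu_Ioc01_compl
    intro x hx; exact hx.2
  have h2 : Set.Ioc l u ∩ Set.Ioc (0:ℝ) 1 = Set.Ioc (max l 0) (min u 1) := Set.Ioc_inter_Ioc
  rw [← hsplit, h1, add_zero, h2]

lemma preimage_Ioc_trunc (l u : ℝ) :
    ecfR ⁻¹' (Set.Ioc l u) ∩ ECFdom = ecfR ⁻¹' (Set.Ioc (max l 0) (min u 1)) ∩ ECFdom := by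
  ext x
  constructor
  · rintro ⟨hpre, hdom⟩
    have h01 := (ecfR_mem hdom).2
    refine ⟨?_, hdom⟩
    simp only [Set.mem_preimage, Set.mem_Ioc] at hpre ⊢
    exact ⟨max_lt hpre.1 h01.1, le_min hpre.2 h01.2.le⟩
  · rintro ⟨hpre, hdom⟩
    refine ⟨?_, hdom⟩
    simp only [Set.mem_preimage, Set.mem_Ioc] at hpre ⊢
    exact ⟨lt_of_le_of_lt (le_max_left l 0) hpre.1, le_trans hpre.2 (min_le_left u 1)⟩

lemma map_Ioc_eq (l u : ℝ) : ecfMu (ecfR ⁻¹' (Set.Ioc l u)) = ecfMu (Set.Ioc l u) := by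
  rw [← inter_dom_eq (ecfR ⁻¹' (Set.Ioc l u)), preimage_Ioc_trunc l u]
  set a' := max l 0
  set b' := min u 1
  have ha' : 0 ≤ a' := le_max_right l 0
  have hb' : b' ≤ 1 := min_le_right u 1
  rcases le_or_gt a' b' with hab | hab
  · rw [main_Ioc ha' hab hb']
    exact (Ioc_measure_eq_trunc l u).symm
  · have hempty : Set.Ioc a' b' = ∅ := Set.Ioc_eq_empty (not_lt.2 hab.le)
    rw [hempty]
    rw [Ioc_measure_eq_trunc]
    show ecfMu (ecfR ⁻¹' ∅ ∩ ECFdom) = ecfMu (Set.Ioc a' b')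
    rw [hempty]
    simp

lemma ecfMu_map_ecfR : MeasureTheory.Measure.map ecfR ecfMu = ecfMu := by
  haveI : IsFiniteMeasure (MeasureTheory.Measure.map ecfR ecfMu) := by
    constructor
    rw [MeasureTheory.Measure.map_apply measurable_ecfR MeasurableSet.univ]
    exact measure_lt_top _ _
  refine MeasureTheory.ext_of_generate_finite
    {S : Set ℝ | ∃ l u, l < u ∧ Set.Ioc l u = S} ?_ (isPiSystem_Ioc (id : ℝ → ℝ) id) ?_ ?_
  · exact (BorelSpace.measurable_eq).trans (borel_eq_generateFrom_Ioc ℝ)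
  · rintro s ⟨l, u, hlu, rfl⟩
    rw [MeasureTheory.Measure.map_apply measurable_ecfR measurableSet_Ioc]
    exact map_Ioc_eq l u
  · rw [MeasureTheory.Measure.map_apply measurable_ecfR MeasurableSet.univ]
    simp

end ECFaux


end

/-- The jump transformation `R` preserves the probability measure `μ`. -/
theorem ecfR_preserves_mu :
    ∀ A : Set ℝ, MeasurableSet A → A ⊆ ECFdom →
      ecfMu (ecfR ⁻¹' A ∩ ECFdom) = ecfMu A := by
  intro A hA _
  rw [ECFaux.inter_dom_eq, ← MeasureTheory.Measure.map_apply ECFaux.measurable_ecfR hA,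
    ECFaux.ecfMu_map_ecfR]
end

section
/- For every symbol σ = (h,(m,ε)) ∈ Σ with (m,ε) ≠ (1,−1), let C[σ] = {x ∈ (0,1]∖ℚ : τ(x) = h, and the ECF digit of x at index h+1 is (m,ε)}. Then there exist integers a, b, c, d with ad − bc = ±1 such that R(x) = (ax+b)/(cx+d) for all x ∈ C[σ], and the Möbius map M(x) = (ax+b)/(cx+d) satisfies |M′(x)| ≥ 4 and |M″(x)/M′(x)²| ≤ 2 for every x ∈ C[σ]. In particular R is uniformly expanding with uniformly bounded distortion: inf over irrational x in (0,1] of |R′(x)| is ≥ 4 and sup of |R″(x)/(R′(x))²| is ≤ 2, the derivatives being those of the corresponding Möbius maps. -/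
open MeasureTheory Filter

private lemma ecfT_step {x : ℝ} (hx : x ∈ Set.Ioo (0:ℝ) 1) (hirr : Irrational x) :
    ecfT x ∈ Set.Ioo (0:ℝ) 1 ∧ Irrational (ecfT x) := by
  obtain ⟨hx0, hx1⟩ := hx
  have hinv : (1:ℝ) < 1/x := by rw [lt_div_iff₀ hx0]; linarith
  have hirr_inv : Irrational (1/x) := by rw [one_div]; exact hirr.inv
  have hn1 : 1 ≤ ⌊1/x⌋ := Int.le_floor.mpr (by exact_mod_cast hinv.le)
  set n : ℤ := ⌊1/x⌋ with hn
  have hfl : (n:ℝ) ≤ 1/x := Int.floor_le _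
  have hfu : 1/x < (n:ℝ) + 1 := Int.lt_floor_add_one _
  have hne : (1:ℝ)/x ≠ (n:ℝ) := fun hEq => (hirr_inv.ne_int n) hEq
  have hflt : (n:ℝ) < 1/x := lt_of_le_of_ne hfl (Ne.symm hne)
  rcases Int.even_or_odd n with ⟨k, hk⟩ | ⟨k, hk⟩
  · have hmod : n % 2 = 0 := by omega
    have hxi : ecfXi x = 1 := by rw [ecfXi, ← hn, if_pos hmod]
    have hk2 : 2 * (ecfK x : ℤ) = n := by
      rw [ecfK, ← hn]; omega
    have h2k : 2 * (ecfK x : ℝ) = (n:ℝ) := by exact_mod_cast hk2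
    have hT : ecfT x = 1/x - (n:ℝ) := by
      rw [ecfT, hxi, ← h2k]; push_cast; ring
    refine ⟨⟨by rw [hT]; linarith, by rw [hT]; linarith⟩, ?_⟩
    rw [hT]; exact hirr_inv.sub_intCast n
  · have hmod : ¬ (n % 2 = 0) := by omega
    have hxi : ecfXi x = -1 := by rw [ecfXi, ← hn, if_neg hmod]
    have hk2 : 2 * (ecfK x : ℤ) = n + 1 := by
      rw [ecfK, ← hn]; omega
    have h2k : 2 * (ecfK x : ℝ) = (n:ℝ) + 1 := by exact_mod_cast hk2
    have hT : ecfT x = ((n:ℝ) + 1) - 1/x := by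
      rw [ecfT, hxi, ← h2k]; push_cast; ring
    refine ⟨⟨by rw [hT]; linarith, by rw [hT]; linarith⟩, ?_⟩
    rw [hT]
    have : Irrational ((((n+1):ℤ):ℝ) - 1/x) := hirr_inv.intCast_sub (n+1)
    simpa using this

private lemma half_digits {x : ℝ} (hx : x ∈ Set.Ioo (1/2 : ℝ) 1) :
    ecfK x = 1 ∧ ecfXi x = -1 ∧ ecfT x = 2 - 1/x := by
  obtain ⟨hx0, hx1⟩ := hx
  have hxpos : (0:ℝ) < x := by linarith
  have hfl : ⌊1/x⌋ = 1 := by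
    rw [Int.floor_eq_iff]
    constructor
    · push_cast
      rw [le_div_iff₀ hxpos]; linarith
    · push_cast
      rw [div_lt_iff₀ hxpos]; linarith
  have hK : ecfK x = 1 := by rw [ecfK, hfl]; rfl
  have hXi : ecfXi x = -1 := by rw [ecfXi, hfl]; norm_num
  refine ⟨hK, hXi, ?_⟩
  rw [ecfT, hXi, hK]; push_cast; ring

private lemma moebius_hasDerivAt (a b c d x : ℝ) (hx : c*x + d ≠ 0) :
    HasDerivAt (fun y : ℝ => (a*y+b)/(c*y+d)) ((a*d - b*c)/(c*x+d)^2) x := by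
  have h1 : HasDerivAt (fun y : ℝ => a*y+b) a x := by
    simpa using ((hasDerivAt_id x).const_mul a).add_const b
  have h2 : HasDerivAt (fun y : ℝ => c*y+d) c x := by
    simpa using ((hasDerivAt_id x).const_mul c).add_const d
  have h3 := h1.fun_div h2 hx
  refine h3.congr_deriv ?_
  field_simp
  ring

private lemma moebius_deriv (a b c d x : ℝ) (hx : c*x + d ≠ 0) :
    deriv (fun y : ℝ => (a*y+b)/(c*y+d)) x = (a*d - b*c)/(c*x+d)^2 :=
  (moebius_hasDerivAt a b c d x hx).deriv

private lemma moebius_deriv2 (a b c d x : ℝ) (hx : c*x + d ≠ 0) :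
    deriv (deriv (fun y : ℝ => (a*y+b)/(c*y+d))) x
      = -(2*c*(a*d-b*c))/(c*x+d)^3 := by
  have hU : IsOpen {y : ℝ | c*y + d ≠ 0} := by
    have : {y : ℝ | c*y + d ≠ 0} = (fun y : ℝ => c*y+d) ⁻¹' {(0:ℝ)}ᶜ := by
      ext y; simp
    rw [this]
    exact (isOpen_compl_singleton).preimage (by fun_prop)
  have hev : deriv (fun y : ℝ => (a*y+b)/(c*y+d))
      =ᶠ[nhds x] (fun y => (a*d-b*c)/(c*y+d)^2) := by
    filter_upwards [hU.mem_nhds hx] with y hy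
    exact moebius_deriv a b c d y hy
  rw [hev.deriv_eq]
  have h2 : HasDerivAt (fun y : ℝ => c*y+d) c x := by
    simpa using ((hasDerivAt_id x).const_mul c).add_const d
  have hsq : HasDerivAt (fun y : ℝ => (c*y+d)^2) (2*(c*x+d)*c) x := by
    simpa using h2.fun_pow 2
  have hd := (hasDerivAt_const x (a*d-b*c)).fun_div hsq (pow_ne_zero 2 hx)
  rw [hd.deriv]
  field_simp
  ring

set_option maxHeartbeats 1000000 in
/-- On each length-one Σ-cylinder `C[h·m^ε]`, the jump transformation `R` coincides with a
Möbius map with integer coefficients and determinant `±1`, which is uniformly expanding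
(`|M'| ≥ 4`) with uniformly bounded distortion (`|M''/M'²| ≤ 2`). -/
theorem ecfR_moebius_expanding_bounded_distortion :
    ∀ (h m : ℕ) (ε : ℤ), 1 ≤ m → (ε = 1 ∨ ε = -1) → ¬(m = 1 ∧ ε = -1) →
      ∃ a b c d : ℤ, (a * d - b * c = 1 ∨ a * d - b * c = -1) ∧
        ∀ x ∈ {x : ℝ | x ∈ ECFdom ∧ ecfTau x = h ∧
            ecfDigK x (h+1) = m ∧ ecfDigXi x (h+1) = ε},
          ecfR x = ((a : ℝ) * x + b) / ((c : ℝ) * x + d) ∧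
          4 ≤ |deriv (fun y : ℝ => ((a : ℝ) * y + b) / ((c : ℝ) * y + d)) x| ∧
          |deriv (deriv (fun y : ℝ => ((a : ℝ) * y + b) / ((c : ℝ) * y + d))) x /
            (deriv (fun y : ℝ => ((a : ℝ) * y + b) / ((c : ℝ) * y + d)) x) ^ 2| ≤ 2 := by
  intro h m ε hm hε hne
  refine ⟨ε * ((h:ℤ) - 2*m*(h+1)), ε * (2*m*h - h + 1), (h:ℤ)+1, -(h:ℤ), ?_, ?_⟩
  · rcases hε with rfl | rfl
    · right; ring
    · left; ring
  intro x hx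
  obtain ⟨⟨hdom, hirr⟩, hτ, hKdig, hXidig⟩ := hx
  have hx01 : x ∈ Set.Ioo (0:ℝ) 1 := ⟨hdom.1, lt_of_le_of_ne hdom.2 hirr.ne_one⟩
  -- iterates stay in (0,1) and irrational
  have iter : ∀ j : ℕ, ecfT^[j] x ∈ Set.Ioo (0:ℝ) 1 ∧ Irrational (ecfT^[j] x) := by
    intro j
    induction j with
    | zero => exact ⟨hx01, hirr⟩
    | succ j ih =>
      rw [Function.iterate_succ_apply']
      exact ecfT_step ih.1 ih.2
  set y := ecfT^[h] x with hy
  -- digit facts about y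
  have hKy : ecfK y = m := by
    have h1 : ecfDigK x (h+1) = ecfK y := by
      rw [ecfDigK]; simp [hy]
    rw [← h1, hKdig]
  have hXy : ecfXi y = ε := by
    have h1 : ecfDigXi x (h+1) = ecfXi y := by
      rw [ecfDigXi]; simp [hy]
    rw [← h1, hXidig]
  -- y ≤ 1/2
  have hy_half : y ≤ 1/2 := by
    by_contra hgt
    push_neg at hgt
    obtain ⟨hK1, hX1, _⟩ := half_digits ⟨hgt, (iter h).1.2⟩
    exact hne ⟨by rw [← hKy, hK1], by rw [← hXy, hX1]⟩
  have hmid : ∀ j, j < h → ecfT^[j] x ∈ Set.Ioo (1/2 : ℝ) 1 := by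
    intro j hj
    have hjS : j ∉ {j : ℕ | ecfT^[j] x ∈ Set.Ioc (0:ℝ) (1/2)} := by
      apply Nat.notMem_of_lt_sInf
      rw [← ecfTau, hτ]; exact hj
    have hIoo := (iter j).1
    constructor
    · by_contra hle
      push_neg at hle
      exact hjS ⟨hIoo.1, hle⟩
    · exact hIoo.2
  -- key recursion
  have key : ∀ j, j ≤ h → 0 < (j:ℝ)*x - j + 1 ∧
      (ecfT^[j] x) * ((j:ℝ)*x - j + 1) = ((j:ℝ)+1)*x - j := by
    intro j
    induction j with
    | zero => intro _; simp
    | succ j ih =>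
      intro hj
      obtain ⟨hD, hE⟩ := ih (Nat.le_of_succ_le hj)
      have hmj := hmid j (Nat.lt_of_succ_le hj)
      have hDpos : 0 < ((j:ℝ)+1)*x - j := by
        rw [← hE]; exact mul_pos (by linarith [hmj.1]) hD
      have hTne : ecfT^[j] x ≠ 0 := ne_of_gt (by linarith [hmj.1] : (0:ℝ) < ecfT^[j] x)
      have hstep : ecfT^[j+1] x = 2 - 1/(ecfT^[j] x) := by
        rw [Function.iterate_succ_apply']
        exact (half_digits hmj).2.2
      constructor
      · push_cast; linarith
      · rw [hstep]
        push_cast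
        field_simp
        nlinarith [hE]
  obtain ⟨hDh, hEh⟩ := key h le_rfl
  set Dh : ℝ := (h:ℝ)*x - h + 1 with hDhdef
  set E : ℝ := ((h:ℝ)+1)*x - h with hEdef
  have hy0 : 0 < y := (iter h).1.1
  have hEpos : 0 < E := by rw [← hEh]; exact mul_pos hy0 hDh
  have hEne : E ≠ 0 := ne_of_gt hEpos
  have hDne : Dh ≠ 0 := ne_of_gt hDh
  have hyne : y ≠ 0 := ne_of_gt hy0
  have hyE : y = E / Dh := by
    rw [eq_div_iff hDne]; exact hEh
  have h2E : 2 * E ≤ Dh := by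
    have h1 : y * Dh ≤ (1/2) * Dh :=
      mul_le_mul_of_nonneg_right hy_half (le_of_lt hDh)
    rw [hEh] at h1
    linarith
  have hEub : E ≤ 1/((h:ℝ)+2) := by
    have hkey2 : ((h:ℝ)+1)*(2*E - Dh) ≤ 0 :=
      mul_nonpos_of_nonneg_of_nonpos (by positivity) (by linarith)
    rw [le_div_iff₀ (by positivity : (0:ℝ) < (h:ℝ)+2)]
    nlinarith [hkey2]
  -- denominator identity
  have hden : ((((h:ℤ)+1 : ℤ)):ℝ) * x + ((-(h:ℤ) : ℤ):ℝ) = E := by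
    push_cast; rw [hEdef]; ring
  have hdenne : ((((h:ℤ)+1 : ℤ)):ℝ) * x + ((-(h:ℤ) : ℤ):ℝ) ≠ 0 := by
    rw [hden]; exact hEne
  -- the Möbius formula
  have hRx : ecfR x =
      (((ε * ((h:ℤ) - 2*m*(h+1)) : ℤ):ℝ) * x + ((ε * (2*m*h - h + 1) : ℤ):ℝ)) / E := by
    rw [ecfR, hτ, Function.iterate_succ_apply', ← hy, ecfT, hXy, hKy, hyE]
    rw [one_div_div]
    push_cast
    rw [hDhdef, hEdef]
    have hEne' : x * ((h:ℝ) + 1) - (h:ℝ) ≠ 0 := fun h0 => hEne (by rw [hEdef]; linarith)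
    field_simp
    ring
  -- determinant (real)
  have hdetR : ((ε * ((h:ℤ) - 2*m*(h+1)) : ℤ):ℝ) * ((-(h:ℤ) : ℤ):ℝ)
      - ((ε * (2*m*h - h + 1) : ℤ):ℝ) * ((((h:ℤ)+1 : ℤ)):ℝ) = -(ε:ℝ) := by
    push_cast; ring
  have hd1 := moebius_deriv (((ε * ((h:ℤ) - 2*m*(h+1)) : ℤ)):ℝ)
      (((ε * (2*m*h - h + 1) : ℤ)):ℝ) ((((h:ℤ)+1 : ℤ)):ℝ) ((-(h:ℤ) : ℤ):ℝ) x hdenne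
  have hd2 := moebius_deriv2 (((ε * ((h:ℤ) - 2*m*(h+1)) : ℤ)):ℝ)
      (((ε * (2*m*h - h + 1) : ℤ)):ℝ) ((((h:ℤ)+1 : ℤ)):ℝ) ((-(h:ℤ) : ℤ):ℝ) x hdenne
  rw [hdetR, hden] at hd1 hd2
  have hεabs : |(-(ε:ℝ))| = 1 := by rcases hε with rfl | rfl <;> norm_num
  have hεa : |((ε:ℝ))| = 1 := by rcases hε with rfl | rfl <;> norm_num
  have hε2 : ((ε:ℝ))^2 = 1 := by rcases hε with rfl | rfl <;> norm_num
  have hE2 : E^2 ≤ 1/4 := by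
    have hhalf : E ≤ 1/2 := by
      have h12 : 1/((h:ℝ)+2) ≤ 1/2 := by
        apply div_le_div_of_nonneg_left (by norm_num) (by norm_num)
        · push_cast; linarith [Nat.cast_nonneg (α := ℝ) h]
      linarith
    nlinarith [hhalf, hEpos]
  clear_value y Dh E
  refine ⟨?_, ?_, ?_⟩
  · rw [hRx, hden]
  · rw [hd1, abs_div, hεabs]
    rw [le_div_iff₀ (by positivity : (0:ℝ) < |E^2|)]
    rw [abs_of_pos (by positivity : (0:ℝ) < E^2)]
    linarith [hE2]
  · rw [hd1, hd2]
    set C : ℝ := ((((h:ℤ)+1 : ℤ)):ℝ) with hCdef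
    have hCval : C = (h:ℝ)+1 := by rw [hCdef]; push_cast; ring
    have hCpos : (0:ℝ) < C := by rw [hCval]; positivity
    have hratio : -(2*C*(-(ε:ℝ)))/E^3 / ((-(ε:ℝ))/E^2)^2 = 2*C*(ε:ℝ)*E := by
      rw [div_pow, div_div_div_comm, neg_pow, hε2]
      field_simp
    rw [hratio]
    have habs : |2*C*(ε:ℝ)*E| = 2*C*E := by
      rw [abs_mul, abs_mul, abs_mul, hεa, abs_of_pos hCpos, abs_of_pos hEpos, abs_two,
        mul_one]
    rw [habs, hCval]
    have hfe : 2*((h:ℝ)+1)*E ≤ 2*((h:ℝ)+1) * (1/((h:ℝ)+2)) :=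
      mul_le_mul_of_nonneg_left hEub (by positivity)
    have hlast : 2*((h:ℝ)+1) * (1/((h:ℝ)+2)) ≤ 2 := by
      rw [mul_one_div, div_le_iff₀ (by positivity : (0:ℝ) < (h:ℝ)+2)]
      linarith
    linarith
end

section
/- For every irrational x ∈ (0,1] and every n ≥ 1, the ECF convergents satisfy |x − p_n(x)/q_n(x)| ≤ 1/q_n(x) and q_n(x) ≥ n + 1. -/
open MeasureTheory Filter

section ECFaux

lemma ecfXi_cases (x : ℝ) : ecfXi x = 1 ∨ ecfXi x = -1 := by
  unfold ecfXi; split <;> simp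

lemma ecf_basic {x : ℝ} (hx : x ∈ ECFdom) :
    ecfT x ∈ ECFdom ∧ ecfT x < 1 ∧ 1 ≤ ecfK x ∧
      x * (2 * (ecfK x : ℝ) + (ecfXi x : ℝ) * ecfT x) = 1 := by
  obtain ⟨⟨hx0, hx1⟩, hirr⟩ := hx
  have hxne : x ≠ 0 := ne_of_gt hx0
  have hx1' : x < 1 := lt_of_le_of_ne hx1 (by
    intro h; exact hirr ⟨1, by simp [h]⟩)
  have hinv1 : 1 < 1/x := by rw [lt_div_iff₀ hx0]; linarith
  have hirrinv : Irrational (1/x) := by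
    rw [one_div]; exact hirr.inv
  set m : ℤ := ⌊1/x⌋ with hm
  have hm1 : 1 ≤ m := by
    have := Int.le_floor.mpr (by exact_mod_cast hinv1.le : ((1:ℤ):ℝ) ≤ 1/x)
    exact this
  have hfl : (m : ℝ) < 1/x :=
    lt_of_le_of_ne (Int.floor_le _) (fun h => hirrinv.ne_int m h.symm)
  have hfu : 1/x < (m : ℝ) + 1 := Int.lt_floor_add_one _
  have hk2 : (2 * (ecfK x : ℤ)) = if m % 2 = 0 then m else m + 1 := by
    have hkdef : ecfK x = (m + 1).toNat / 2 := rfl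
    rw [hkdef]; split <;> omega
  have hxi : ecfXi x = if m % 2 = 0 then 1 else -1 := rfl
  have hk1 : 1 ≤ ecfK x := by
    have hkdef : ecfK x = (m + 1).toNat / 2 := rfl
    omega
  have hTdef : ecfT x = (ecfXi x : ℝ) * (1/x - 2 * (ecfK x : ℝ)) := rfl
  rcases Int.emod_two_eq_zero_or_one m with hpar | hpar
  · -- even case : ξ = 1, 2k = m
    have h2k : (2 * (ecfK x : ℤ)) = m := by rw [hk2]; simp [hpar]
    have h2kR : 2 * (ecfK x : ℝ) = (m : ℝ) := by exact_mod_cast h2k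
    have hxiR : (ecfXi x : ℝ) = 1 := by rw [hxi]; simp [hpar]
    have hT : ecfT x = 1/x - (m : ℝ) := by rw [hTdef, hxiR, h2kR]; ring
    have hT0 : 0 < ecfT x := by rw [hT]; linarith
    have hT1 : ecfT x < 1 := by rw [hT]; linarith
    have hTirr : Irrational (ecfT x) := by
      rw [hT]; exact hirrinv.sub_intCast m
    refine ⟨⟨⟨hT0, hT1.le⟩, hTirr⟩, hT1, hk1, ?_⟩
    rw [hxiR, hT, h2kR]; field_simp; try ring
  · -- odd case : ξ = -1, 2k = m + 1
    have hpar' : ¬ (m % 2 = 0) := by omega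
    have h2k : (2 * (ecfK x : ℤ)) = m + 1 := by rw [hk2]; simp [hpar']
    have h2kR : 2 * (ecfK x : ℝ) = (m : ℝ) + 1 := by exact_mod_cast h2k
    have hxiR : (ecfXi x : ℝ) = -1 := by rw [hxi]; simp [hpar']
    have hT : ecfT x = (m : ℝ) + 1 - 1/x := by rw [hTdef, hxiR, h2kR]; ring
    have hT0 : 0 < ecfT x := by rw [hT]; linarith
    have hT1 : ecfT x < 1 := by rw [hT]; linarith
    have hTirr : Irrational (ecfT x) := by
      rw [hT]
      have : Irrational (-(1/x)) := hirrinv.neg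
      have := this.intCast_add (m + 1)
      convert this using 1
      push_cast; ring
    refine ⟨⟨⟨hT0, hT1.le⟩, hTirr⟩, hT1, hk1, ?_⟩
    rw [hxiR, hT, h2kR]; field_simp; try ring

lemma ecf_orbit {x : ℝ} (hx : x ∈ ECFdom) : ∀ n : ℕ, ecfT^[n] x ∈ ECFdom := by
  intro n
  induction n with
  | zero => simpa using hx
  | succ n ih =>
    rw [Function.iterate_succ_apply']
    exact (ecf_basic ih).1

lemma ecf_orbit_lt_one {x : ℝ} (hx : x ∈ ECFdom) (n : ℕ) : ecfT^[n+1] x < 1 := by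
  rw [Function.iterate_succ_apply']
  exact (ecf_basic (ecf_orbit hx n)).2.1

lemma ecf_orbit_pos {x : ℝ} (hx : x ∈ ECFdom) (n : ℕ) : 0 < ecfT^[n] x :=
  (ecf_orbit hx n).1.1

/-- The fundamental identity for ECF convergents. -/
lemma ecf_identity {x : ℝ} (hx : x ∈ ECFdom) : ∀ n : ℕ,
    x * ((ecfQ x (n+1) : ℝ) + (ecfDigXi x (n+1) : ℝ) * ecfT^[n+1] x * (ecfQ x n : ℝ))
      = (ecfP x (n+1) : ℝ) + (ecfDigXi x (n+1) : ℝ) * ecfT^[n+1] x * (ecfP x n : ℝ) := by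
  intro n
  induction n with
  | zero =>
    have hq1 : ecfQ x 1 = 2 * (ecfDigK x 1 : ℤ) := rfl
    have hq0 : ecfQ x 0 = 1 := rfl
    have hp1 : ecfP x 1 = ecfDigXi x 0 := rfl
    have hp0 : ecfP x 0 = 0 := rfl
    have hk : ecfDigK x 1 = ecfK x := rfl
    have hxi : ecfDigXi x 1 = ecfXi x := rfl
    have hxi0 : ecfDigXi x 0 = 1 := rfl
    have hT : ecfT^[1] x = ecfT x := by simp
    rw [hq1, hq0, hp1, hp0, hk, hxi, hxi0, hT]
    have key := (ecf_basic hx).2.2.2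
    push_cast
    linarith [key]
  | succ n ih =>
    set y := ecfT^[n+1] x with hy
    have hydom : y ∈ ECFdom := ecf_orbit hx (n+1)
    have hyne : y ≠ 0 := ne_of_gt hydom.1.1
    have key := (ecf_basic hydom).2.2.2
    have hkdig : ecfDigK x (n+2) = ecfK y := rfl
    have hxidig : ecfDigXi x (n+2) = ecfXi y := rfl
    have hT2 : ecfT^[n+2] x = ecfT y := by
      rw [hy, ← Function.iterate_succ_apply' ecfT (n+1) x]
    have hqrec : ecfQ x (n+2) = 2 * (ecfDigK x (n+2) : ℤ) * ecfQ x (n+1)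
        + ecfDigXi x (n+1) * ecfQ x n := rfl
    have hprec : ecfP x (n+2) = 2 * (ecfDigK x (n+2) : ℤ) * ecfP x (n+1)
        + ecfDigXi x (n+1) * ecfP x n := rfl
    have goal' : y * (x * ((ecfQ x (n+2) : ℝ) + (ecfDigXi x (n+2) : ℝ) * ecfT^[n+2] x * (ecfQ x (n+1) : ℝ)))
        = y * ((ecfP x (n+2) : ℝ) + (ecfDigXi x (n+2) : ℝ) * ecfT^[n+2] x * (ecfP x (n+1) : ℝ)) := by
      rw [hqrec, hprec, hkdig, hxidig, hT2]
      push_cast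
      linear_combination (x * (ecfQ x (n+1) : ℝ) - (ecfP x (n+1) : ℝ)) * key + ih
    exact mul_left_cancel₀ hyne goal'

/-- Growth of denominators. -/
lemma ecf_q_growth {x : ℝ} (hx : x ∈ ECFdom) :
    ∀ n : ℕ, 1 ≤ ecfQ x n ∧ ecfQ x n + 1 ≤ ecfQ x (n+1) := by
  intro n
  induction n with
  | zero =>
    have hq0 : ecfQ x 0 = 1 := rfl
    have hq1 : ecfQ x 1 = 2 * (ecfDigK x 1 : ℤ) := rfl
    have hk : ecfDigK x 1 = ecfK x := rfl
    have hk1 : 1 ≤ ecfK x := (ecf_basic hx).2.2.1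
    constructor
    · rw [hq0]
    · rw [hq0, hq1, hk]
      have : (1 : ℤ) ≤ (ecfK x : ℤ) := by exact_mod_cast hk1
      linarith
  | succ n ih =>
    obtain ⟨h1, h2⟩ := ih
    refine ⟨by linarith, ?_⟩
    have hqrec : ecfQ x (n+2) = 2 * (ecfDigK x (n+2) : ℤ) * ecfQ x (n+1)
        + ecfDigXi x (n+1) * ecfQ x n := rfl
    have hkdig : ecfDigK x (n+2) = ecfK (ecfT^[n+1] x) := rfl
    have hk1 : 1 ≤ ecfDigK x (n+2) := by
      rw [hkdig]; exact (ecf_basic (ecf_orbit hx (n+1))).2.2.1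
    have hk1' : (1 : ℤ) ≤ (ecfDigK x (n+2) : ℤ) := by exact_mod_cast hk1
    have hxi : ecfDigXi x (n+1) = 1 ∨ ecfDigXi x (n+1) = -1 := by
      have : ecfDigXi x (n+1) = ecfXi (ecfT^[n] x) := rfl
      rw [this]; exact ecfXi_cases _
    rw [hqrec]
    have hmul : 2 * ecfQ x (n+1) ≤ 2 * (ecfDigK x (n+2) : ℤ) * ecfQ x (n+1) := by
      nlinarith
    rcases hxi with h | h <;> rw [h] <;> nlinarith

lemma ecf_q_lower {x : ℝ} (hx : x ∈ ECFdom) : ∀ n : ℕ, (n : ℤ) + 1 ≤ ecfQ x n := by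
  intro n
  induction n with
  | zero => simpa using (ecf_q_growth hx 0).1
  | succ n ih =>
    have := (ecf_q_growth hx n).2
    push_cast
    linarith

/-- The key approximation bound in product form. -/
lemma ecf_linear_bound {x : ℝ} (hx : x ∈ ECFdom) :
    ∀ n : ℕ, |x * (ecfQ x n : ℝ) - (ecfP x n : ℝ)| ≤ 1 := by
  intro n
  induction n with
  | zero =>
    have hq0 : ecfQ x 0 = 1 := rfl
    have hp0 : ecfP x 0 = 0 := rfl
    rw [hq0, hp0]
    simp only [Int.cast_one, Int.cast_zero, mul_one, sub_zero]
    rw [abs_of_pos hx.1.1]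
    exact hx.1.2
  | succ n ih =>
    have hid := ecf_identity hx n
    have heq : x * (ecfQ x (n+1) : ℝ) - (ecfP x (n+1) : ℝ)
        = (ecfDigXi x (n+1) : ℝ) * ecfT^[n+1] x * ((ecfP x n : ℝ) - x * (ecfQ x n : ℝ)) := by
      linarith [hid]
    rw [heq, abs_mul, abs_mul]
    have hxiabs : |(ecfDigXi x (n+1) : ℝ)| = 1 := by
      have : ecfDigXi x (n+1) = ecfXi (ecfT^[n] x) := rfl
      rcases ecfXi_cases (ecfT^[n] x) with h | h <;> rw [this, h] <;> norm_num
    have hT0 : 0 < ecfT^[n+1] x := ecf_orbit_pos hx (n+1)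
    have hT1 : ecfT^[n+1] x < 1 := ecf_orbit_lt_one hx n
    have habsT : |ecfT^[n+1] x| ≤ 1 := by rw [abs_of_pos hT0]; linarith
    have habs' : |(ecfP x n : ℝ) - x * (ecfQ x n : ℝ)| ≤ 1 := by
      rw [abs_sub_comm]; exact ih
    calc |(ecfDigXi x (n+1) : ℝ)| * |ecfT^[n+1] x| * |(ecfP x n : ℝ) - x * (ecfQ x n : ℝ)|
        ≤ 1 * 1 * 1 := by
          apply mul_le_mul _ habs' (abs_nonneg _) (by norm_num)
          apply mul_le_mul (le_of_eq hxiabs) habsT (abs_nonneg _) (by norm_num)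
      _ = 1 := by norm_num

end ECFaux

/-- Approximation quality and growth of ECF denominators:
`|x - p_n/q_n| ≤ 1/q_n` and `q_n ≥ n + 1`. -/
theorem ecf_convergent_estimates :
    ∀ x ∈ ECFdom, ∀ n : ℕ, 1 ≤ n →
      |x - (ecfP x n : ℝ) / (ecfQ x n : ℝ)| ≤ 1 / (ecfQ x n : ℝ) ∧
      (n : ℤ) + 1 ≤ ecfQ x n := by
  intro x hx n hn
  have hq := ecf_q_lower hx n
  refine ⟨?_, hq⟩
  have hqpos : (0 : ℤ) < ecfQ x n := by
    have := (ecf_q_growth hx n).1; linarith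
  have hqposR : (0 : ℝ) < (ecfQ x n : ℝ) := by exact_mod_cast hqpos
  have hb := ecf_linear_bound hx n
  have heq : x - (ecfP x n : ℝ) / (ecfQ x n : ℝ)
      = (x * (ecfQ x n : ℝ) - (ecfP x n : ℝ)) / (ecfQ x n : ℝ) := by
    field_simp
  rw [heq, abs_div, abs_of_pos hqposR]
  gcongr
end

section
/- For every irrational x ∈ (0,1] and every n ≥ 1, the R-denominators satisfy q̂_n(x) ≥ max{n + 2, 3^{n/3}}. In particular q̂_n(x) ≥ 3^{n/3} for all n ∈ ℕ. -/
open MeasureTheory Filter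

namespace ECFaux


lemma mem_Ioo {y : ℝ} (hy : y ∈ ECFdom) : y ∈ Set.Ioo (0:ℝ) 1 := by
  obtain ⟨⟨h0, h1⟩, hirr⟩ := hy
  refine ⟨h0, lt_of_le_of_ne h1 ?_⟩
  intro h
  exact hirr.ne_int 1 (by rw [h]; norm_num)

lemma one_lt_inv {y : ℝ} (hy : y ∈ ECFdom) : 1 < 1/y := by
  obtain ⟨h0, h1⟩ := mem_Ioo hy
  rw [lt_div_iff₀ h0]; linarith

lemma floor_pos {y : ℝ} (hy : y ∈ ECFdom) : 1 ≤ ⌊1/y⌋ :=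
  Int.le_floor.mpr (by exact_mod_cast (one_lt_inv hy).le)

lemma irr_inv {y : ℝ} (hy : y ∈ ECFdom) : Irrational (1/y) := by
  simpa [one_div] using hy.2.inv

lemma two_mul_ecfK {y : ℝ} (hy : y ∈ ECFdom) :
    (2 * (ecfK y : ℤ)) = if ⌊1/y⌋ % 2 = 0 then ⌊1/y⌋ else ⌊1/y⌋ + 1 := by
  have h := floor_pos hy
  unfold ecfK
  split <;> omega

lemma ecfK_pos {y : ℝ} (hy : y ∈ ECFdom) : 1 ≤ ecfK y := by
  have h := floor_pos hy
  unfold ecfK; omega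

lemma ecfXi_cases (y : ℝ) : ecfXi y = 1 ∨ ecfXi y = -1 := by
  unfold ecfXi; split <;> simp

lemma ecfT_eq {y : ℝ} (hy : y ∈ ECFdom) :
    ecfT y = if ⌊1/y⌋ % 2 = 0 then 1/y - (⌊1/y⌋ : ℝ) else ((⌊1/y⌋ : ℝ) + 1) - 1/y := by
  have h2 := two_mul_ecfK hy
  unfold ecfT ecfXi
  by_cases h : ⌊1/y⌋ % 2 = 0
  · rw [if_pos h] at h2 ⊢
    rw [if_pos h]
    have h2' : 2 * (ecfK y : ℝ) = (⌊1/y⌋ : ℝ) := by exact_mod_cast h2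
    push_cast
    linarith
  · rw [if_neg h] at h2 ⊢
    rw [if_neg h]
    have h2' : 2 * (ecfK y : ℝ) = (⌊1/y⌋ : ℝ) + 1 := by exact_mod_cast h2
    push_cast
    linarith

lemma ecfT_mem {y : ℝ} (hy : y ∈ ECFdom) : ecfT y ∈ ECFdom := by
  have hirr : Irrational (1/y) := irr_inv hy
  have hfr0 : Int.fract (1/y) ≠ 0 := by
    have := (hirr.sub_intCast ⌊1/y⌋).ne_zero
    rwa [Int.fract]
  have hfrpos : 0 < Int.fract (1/y) :=
    lt_of_le_of_ne (Int.fract_nonneg _) (Ne.symm hfr0)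
  have hfrlt : Int.fract (1/y) < 1 := Int.fract_lt_one _
  have hfr : Int.fract (1/y) = 1/y - (⌊1/y⌋ : ℝ) := rfl
  rw [ecfT_eq hy]
  split
  · refine ⟨⟨?_, ?_⟩, hirr.sub_intCast _⟩
    · rw [← hfr]; exact hfrpos
    · rw [← hfr]; exact hfrlt.le
  · refine ⟨⟨?_, ?_⟩, ?_⟩
    · rw [show ((⌊1/y⌋:ℝ) + 1) - 1/y = 1 - Int.fract (1/y) by rw [hfr]; ring]
      linarith
    · rw [show ((⌊1/y⌋:ℝ) + 1) - 1/y = 1 - Int.fract (1/y) by rw [hfr]; ring]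
      linarith
    · have := hirr.intCast_sub (⌊1/y⌋ + 1)
      convert this using 1
      push_cast; ring

lemma iter_mem {x : ℝ} (hx : x ∈ ECFdom) (n : ℕ) : ecfT^[n] x ∈ ECFdom := by
  induction n with
  | zero => exact hx
  | succ n ih => rw [Function.iterate_succ_apply']; exact ecfT_mem ih

lemma ecfK_ge_two {y : ℝ} (hy : y ∈ ECFdom) (hhalf : y ≤ 1/2)
    (hxi : ecfXi y = -1) : 2 ≤ ecfK y := by
  have h0 := (mem_Ioo hy).1
  have hf2 : 2 ≤ ⌊1/y⌋ := by
    apply Int.le_floor.mpr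
    rw [show ((2:ℤ):ℝ) = 2 by norm_num, le_div_iff₀ h0]
    linarith
  have hodd : ¬ (⌊1/y⌋ % 2 = 0) := by
    unfold ecfXi at hxi
    intro h; rw [if_pos h] at hxi; norm_num at hxi
  unfold ecfK; omega



/-- For a point in `(1/2, 1)`, the ECF map is `2 - 1/z`. -/
lemma ecfT_big {z : ℝ} (hz : z ∈ ECFdom) (hhalf : 1/2 < z) :
    ecfT z = 2 - 1/z := by
  obtain ⟨h0, h1⟩ := mem_Ioo hz
  have hfl : ⌊1/z⌋ = 1 := by
    rw [Int.floor_eq_iff]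
    constructor
    · push_cast
      rw [le_div_iff₀ h0]; linarith
    · push_cast
      rw [div_lt_iff₀ h0]; linarith
  rw [ecfT_eq hz, hfl]
  norm_num

lemma tau_nonempty {y : ℝ} (hy : y ∈ ECFdom) :
    {j : ℕ | ecfT^[j] y ∈ Set.Ioc (0:ℝ) (1/2)}.Nonempty := by
  by_contra hem
  rw [Set.not_nonempty_iff_eq_empty] at hem
  have hgt : ∀ j : ℕ, 1/2 < ecfT^[j] y := by
    intro j
    have hmem := iter_mem hy j
    have h0 := (mem_Ioo hmem).1
    have h12 : ecfT^[j] y ∉ Set.Ioc (0:ℝ) (1/2) := by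
      rw [Set.eq_empty_iff_forall_notMem] at hem
      exact hem j
    by_contra h
    push_neg at h
    exact h12 ⟨h0, h⟩
  obtain ⟨hy0, hy1⟩ := mem_Ioo hy
  -- key induction
  have key : ∀ j : ℕ, (1 - y) ≤ (1 - ecfT^[j] y) * y ^ j ∧ ecfT^[j] y ≤ y := by
    intro j
    induction j with
    | zero => simp
    | succ j ih =>
      obtain ⟨ih1, ih2⟩ := ih
      set z := ecfT^[j] y with hz
      have hzmem := iter_mem hy j
      have hz0 := (mem_Ioo hzmem).1
      have hz1 := (mem_Ioo hzmem).2
      have hzgt := hgt j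
      have hstep : ecfT^[j+1] y = 2 - 1/z := by
        rw [Function.iterate_succ_apply', ← hz, ecfT_big hzmem hzgt]
      have hinv : 1 - ecfT^[j+1] y = (1 - z)/z := by
        rw [hstep]
        have hz0' : z ≠ 0 := ne_of_gt hz0
        field_simp
        ring
      have hyj : (0:ℝ) ≤ y ^ j := by positivity
      have hyj1 : y ^ j ≤ 1 := pow_le_one₀ hy0.le hy1.le
      have h1z : 0 ≤ 1 - z := by linarith
      constructor
      · rw [hinv, pow_succ]
        rw [div_mul_eq_mul_div, le_div_iff₀ hz0]
        -- (1-y)*z ≤ (1-z)*(y^j*y)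
        nlinarith [mul_nonneg (mul_nonneg h1z hyj) (sub_nonneg.mpr ih2)]
      · -- ecfT^[j+1] y ≤ y
        have h1 : 1 - y ≤ (1 - z) * y ^ j := ih1
        have h2 : (1 - z) * y ^ j ≤ 1 - z := by nlinarith
        have h3 : (1 - z) ≤ (1 - z)/z := by
          rw [le_div_iff₀ hz0]; nlinarith
        linarith [hinv ▸ (le_trans (le_trans h1 h2) h3)]
  obtain ⟨j, hj⟩ := exists_pow_lt_of_lt_one (show (0:ℝ) < 2*(1-y) by linarith) hy1
  have h1 := (key j).1
  have h2 := hgt j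
  have hyj : (0:ℝ) ≤ y ^ j := by positivity
  nlinarith

lemma tau_spec {y : ℝ} (hy : y ∈ ECFdom) :
    ecfT^[ecfTau y] y ∈ Set.Ioc (0:ℝ) (1/2) :=
  Nat.sInf_mem (tau_nonempty hy)



variable {x : ℝ}

lemma nu_ge (x : ℝ) : ∀ n, n + 1 ≤ ecfNu x n := by
  intro n
  induction n with
  | zero => simp [ecfNu]
  | succ n ih => show n + 2 ≤ ecfNu x n + ecfTau (ecfR^[n] x) + 1; omega

lemma iterR (x : ℝ) : ∀ n, ecfR^[n] x = ecfT^[ecfNu x n - 1] x := by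
  intro n
  induction n with
  | zero => simp [ecfNu]
  | succ n ih =>
    have h1 := nu_ge x n
    rw [Function.iterate_succ_apply', ih, ecfR, ← Function.iterate_add_apply]
    congr 1
    show ecfTau (ecfT^[ecfNu x n - 1] x) + 1 + (ecfNu x n - 1)
        = ecfNu x n + ecfTau (ecfR^[n] x) + 1 - 1
    rw [ih]
    omega

lemma digK_pos (hx : x ∈ ECFdom) (i : ℕ) : 1 ≤ ecfDigK x i :=
  ecfK_pos (iter_mem hx (i-1))

lemma digXi_cases (x : ℝ) (i : ℕ) : ecfDigXi x i = 1 ∨ ecfDigXi x i = -1 := by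
  unfold ecfDigXi
  split
  · left; rfl
  · exact ecfXi_cases _

lemma q_base (hx : x ∈ ECFdom) : ∀ i, 0 ≤ ecfQ x i ∧ ecfQ x i + 1 ≤ ecfQ x (i+1) := by
  intro i
  induction i with
  | zero =>
    constructor
    · norm_num [ecfQ, cfQ]
    · show (cfQ _ _ 0) + 1 ≤ cfQ _ _ 1
      have := digK_pos hx 1
      show (1:ℤ) + 1 ≤ 2 * (ecfDigK x 1 : ℤ)
      omega
  | succ i ih =>
    obtain ⟨ih0, ih1⟩ := ih
    have hq1 : (1:ℤ) ≤ ecfQ x (i+1) := by linarith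
    have hk : (1:ℤ) ≤ (ecfDigK x (i+2) : ℤ) := by exact_mod_cast digK_pos hx (i+2)
    have hrec : ecfQ x (i+2) =
        2 * (ecfDigK x (i+2) : ℤ) * ecfQ x (i+1) + ecfDigXi x (i+1) * ecfQ x i := rfl
    constructor
    · linarith
    · rcases digXi_cases x (i+1) with h | h <;> rw [hrec, h] <;> nlinarith

lemma q_nonneg (hx : x ∈ ECFdom) (i : ℕ) : 0 ≤ ecfQ x i := (q_base hx i).1

lemma q_mono (hx : x ∈ ECFdom) {i j : ℕ} (h : i ≤ j) : ecfQ x i ≤ ecfQ x j := by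
  induction j with
  | zero => have : i = 0 := by omega
            rw [this]
  | succ j ih =>
    rcases Nat.lt_or_ge i (j+1) with h' | h'
    · have := (q_base hx j).2
      have := ih (by omega)
      linarith
    · have : i = j + 1 := by omega
      rw [this]

lemma q_lb (hx : x ∈ ECFdom) (i : ℕ) : (i:ℤ) + 1 ≤ ecfQ x i := by
  induction i with
  | zero => norm_num [ecfQ, cfQ]
  | succ i ih =>
    have := (q_base hx i).2
    push_cast
    linarith

lemma qhat_step (hx : x ∈ ECFdom) (n : ℕ) :
    3 * ecfQhat x n ≤ 2 * ecfQhat x (n+1) := by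
  match n with
  | 0 =>
    have h1 : ecfQhat x 0 = 1 := rfl
    have h2 : ecfQhat x 1 = ecfQ x (ecfNu x 1) := rfl
    have h3 := q_lb hx (ecfNu x 1)
    have h4 := nu_ge x 1
    rw [h1, h2]
    have : ((ecfNu x 1 : ℤ)) + 1 ≤ ecfQ x (ecfNu x 1) := h3
    have h5 : (2:ℤ) ≤ (ecfNu x 1 : ℤ) := by exact_mod_cast h4
    linarith
  | (m+1) =>
    -- block m+2
    set ν := ecfNu x (m+1) with hν
    have hν2 : m + 2 ≤ ν := nu_ge x (m+1)
    obtain ⟨p, hp⟩ : ∃ p, ν = p + 2 := ⟨ν - 2, by omega⟩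
    set y := ecfR^[m+1] x with hy
    have hyT : y = ecfT^[p+1] x := by
      rw [hy, iterR x (m+1), ← hν, hp, show p+2-1 = p+1 from by omega]
    set t := ecfTau y with ht
    have hνsucc : ecfNu x (m+2) = p + t + 3 := by
      show ecfNu x (m+1) + ecfTau (ecfR^[m+1] x) + 1 = p + t + 3
      rw [← hν, ← hy, ← ht, hp]
      ring
    set w := ecfT^[t] y with hw
    have hymem : y ∈ ECFdom := by rw [hyT]; exact iter_mem hx (p+1)
    have hwIoc : w ∈ Set.Ioc (0:ℝ) (1/2) := tau_spec hymem
    have hwx : w = ecfT^[p+t+1] x := by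
      rw [hw, hyT, ← Function.iterate_add_apply]
      congr 1
      omega
    have hwmem : w ∈ ECFdom := by rw [hwx]; exact iter_mem hx (p+t+1)
    -- digit identities
    have hXiw : ecfDigXi x (p+t+2) = ecfXi w := by
      show (if p+t+2 = 0 then 1 else ecfXi (ecfT^[p+t+2-1] x)) = ecfXi w
      rw [if_neg (by omega), show p+t+2-1 = p+t+1 from by omega, hwx]
    have hKw : ecfDigK x (p+t+2) = ecfK w := by
      show ecfK (ecfT^[p+t+2-1] x) = ecfK w
      rw [show p+t+2-1 = p+t+1 from by omega, hwx]
    -- recursions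
    have hrec1 : ecfQ x (p+t+3) =
        2 * (ecfDigK x (p+t+3) : ℤ) * ecfQ x (p+t+2) + ecfDigXi x (p+t+2) * ecfQ x (p+t+1) := rfl
    have hrec2 : ecfQ x (p+t+2) =
        2 * (ecfDigK x (p+t+2) : ℤ) * ecfQ x (p+t+1) + ecfDigXi x (p+t+1) * ecfQ x (p+t) := rfl
    set A := ecfQ x (p+t+2) with hA
    set B := ecfQ x (p+t+1) with hB
    set C := ecfQ x (p+t) with hC
    set Q := ecfQ x (p+2) with hQ
    have hQhat1 : ecfQhat x (m+1) = Q := by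
      show (if m+1 = 0 then 1 else ecfQ x (ecfNu x (m+1))) = Q
      rw [if_neg (by omega), ← hν, hp]
    have hQhat2 : ecfQhat x (m+2) = ecfQ x (p+t+3) := by
      show (if m+2 = 0 then 1 else ecfQ x (ecfNu x (m+2))) = ecfQ x (p+t+3)
      rw [if_neg (by omega), hνsucc]
    have hQA : Q ≤ A := q_mono hx (by omega)
    have hBA : B ≤ A := q_mono hx (by omega)
    have hCB : C ≤ B := q_mono hx (by omega)
    have hC0 : 0 ≤ C := q_nonneg hx _
    have hQ0 : 0 ≤ Q := q_nonneg hx _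
    have hk' : (1:ℤ) ≤ (ecfDigK x (p+t+3) : ℤ) := by exact_mod_cast digK_pos hx (p+t+3)
    have hA0 : (0:ℤ) ≤ A := q_nonneg hx _
    have hB0 : (0:ℤ) ≤ B := q_nonneg hx _
    have hKA : A ≤ (ecfDigK x (p+t+3) : ℤ) * A := le_mul_of_one_le_left hA0 hk'
    rw [hQhat1, hQhat2, hrec1, hXiw]
    rcases ecfXi_cases w with hε | hε
    · rw [hε]
      linarith
    · have hm2 : (2:ℤ) ≤ (ecfDigK x (p+t+2) : ℤ) := by
        rw [hKw]
        exact_mod_cast ecfK_ge_two hwmem hwIoc.2 hε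
      have hMB : 2 * B ≤ (ecfDigK x (p+t+2) : ℤ) * B :=
        mul_le_mul_of_nonneg_right hm2 hB0
      have hAlb : 3 * B ≤ A := by
        rw [hrec2]
        rcases digXi_cases x (p+t+1) with h | h <;> rw [h] <;> linarith
      rw [hε]
      linarith

lemma qhat_lb {x : ℝ} (hx : x ∈ ECFdom) {n : ℕ} (hn : 1 ≤ n) :
    (n:ℤ) + 2 ≤ ecfQhat x n := by
  have h1 : ecfQhat x n = ecfQ x (ecfNu x n) := by
    unfold ecfQhat; rw [if_neg (by omega)]
  have h2 := q_lb hx (ecfNu x n)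
  have h3 := nu_ge x n
  have h4 : (n:ℤ) + 1 ≤ (ecfNu x n : ℤ) := by exact_mod_cast h3
  rw [h1]; linarith

lemma qhat_pow {x : ℝ} (hx : x ∈ ECFdom) (n : ℕ) :
    ((3:ℝ)/2) ^ n ≤ (ecfQhat x n : ℝ) := by
  induction n with
  | zero => simp [ecfQhat]
  | succ n ih =>
    have hstep : (3:ℝ) * (ecfQhat x n : ℝ) ≤ 2 * (ecfQhat x (n+1) : ℝ) := by
      exact_mod_cast qhat_step hx n
    have hpos : (0:ℝ) ≤ ((3:ℝ)/2) ^ n := by positivity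
    rw [pow_succ]
    nlinarith

lemma rpow_le {n : ℕ} : (3:ℝ) ^ ((n:ℝ)/3) ≤ ((3:ℝ)/2) ^ n := by
  have hcube : ((3:ℝ)^((1:ℝ)/3))^(3:ℕ) = 3 := by
    rw [← Real.rpow_natCast ((3:ℝ)^((1:ℝ)/3)) 3, ← Real.rpow_mul (by norm_num)]
    norm_num
  have hnn : (0:ℝ) ≤ (3:ℝ)^((1:ℝ)/3) := Real.rpow_nonneg (by norm_num) _
  have hu : (3:ℝ)^((1:ℝ)/3) ≤ 3/2 := by
    by_contra h
    push_neg at h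
    have := pow_lt_pow_left₀ h (by norm_num : (0:ℝ) ≤ 3/2) (by norm_num : 3 ≠ 0)
    rw [hcube] at this
    norm_num at this
  calc (3:ℝ) ^ ((n:ℝ)/3) = ((3:ℝ)^((1:ℝ)/3)) ^ n := by
        rw [show (n:ℝ)/3 = (1:ℝ)/3 * (n:ℝ) by ring, Real.rpow_mul (by norm_num),
          Real.rpow_natCast]
    _ ≤ ((3:ℝ)/2) ^ n := pow_le_pow_left₀ hnn hu n

end ECFaux

/-- Lower bound for the growth of the `R`-denominators:
`q̂_n(x) ≥ max (n+2) 3^{n/3}` for `n ≥ 1`, and `q̂_n(x) ≥ 3^{n/3}` for all `n`. -/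
theorem ecfQhat_lower_bound :
    ∀ x ∈ ECFdom,
      (∀ n : ℕ, 1 ≤ n →
        max ((n : ℝ) + 2) ((3 : ℝ) ^ ((n : ℝ) / 3)) ≤ (ecfQhat x n : ℝ)) ∧
      (∀ n : ℕ, (3 : ℝ) ^ ((n : ℝ) / 3) ≤ (ecfQhat x n : ℝ)) := by
  intro x hx
  have hpow : ∀ n : ℕ, (3 : ℝ) ^ ((n : ℝ) / 3) ≤ (ecfQhat x n : ℝ) := fun n =>
    le_trans ECFaux.rpow_le (ECFaux.qhat_pow hx n)
  refine ⟨fun n hn => max_le ?_ (hpow n), hpow⟩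
  exact_mod_cast ECFaux.qhat_lb hx hn
end

section
/- For every irrational x ∈ (0,1] and every n ≥ 4, the R-denominators satisfy q̂_n(x) ≥ 3·q̂_{n−3}(x). -/
open MeasureTheory Filter

section AuxProof

open Set

private lemma ecfKey {x : ℝ} (hx0 : 0 < x) (hx1 : x < 1) (hirr : Irrational x) :
    0 < ecfT x ∧ ecfT x < 1 ∧ Irrational (ecfT x) ∧ 1 ≤ ecfK x ∧
    (ecfXi x = 1 ∨ ecfXi x = -1) ∧ (x ≤ 1/2 → ecfXi x = -1 → 2 ≤ ecfK x) := by
  have hxne : x ≠ 0 := ne_of_gt hx0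
  have hinv : Irrational (1/x) := by
    rw [one_div]; exact irrational_inv_iff.mpr hirr
  set a := ⌊1/x⌋ with ha
  have h1x : 1 < 1/x := by rw [lt_div_iff₀ hx0]; linarith
  have ha1 : 1 ≤ a := by
    rw [ha, Int.le_floor]; exact_mod_cast h1x.le
  have hfl : (a:ℝ) ≤ 1/x := Int.floor_le _
  have hflt : (a:ℝ) < 1/x := lt_of_le_of_ne hfl (Ne.symm (hinv.ne_int a))
  have hlt : 1/x < (a:ℝ) + 1 := Int.lt_floor_add_one _
  have hkz : ((ecfK x : ℤ)) = (a + 1) / 2 := by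
    show (((a + 1).toNat / 2 : ℕ) : ℤ) = (a + 1) / 2
    omega
  by_cases hpar : a % 2 = 0
  · -- ξ = 1, 2k = a
    have hxi : ecfXi x = 1 := by rw [ecfXi, ← ha, if_pos hpar]
    have hk2 : (2 * ecfK x : ℤ) = a := by omega
    have hT : ecfT x = 1/x - (a:ℝ) := by
      rw [ecfT, hxi]
      have : (2:ℝ) * (ecfK x : ℝ) = (a:ℝ) := by exact_mod_cast congrArg (Int.cast : ℤ → ℝ) hk2
      rw [this]; push_cast; ring
    refine ⟨by rw [hT]; linarith, by rw [hT]; linarith, ?_, by omega, Or.inl hxi,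
      fun _ h => by rw [hxi] at h; exact absurd h (by norm_num)⟩
    · rw [hT]; exact (irrational_sub_intCast_iff).mpr hinv
  · -- ξ = -1, 2k = a + 1
    have hxi : ecfXi x = -1 := by rw [ecfXi, ← ha, if_neg hpar]
    have hk2 : (2 * ecfK x : ℤ) = a + 1 := by omega
    have h2k : (2:ℝ) * (ecfK x : ℝ) = (a:ℝ) + 1 := by exact_mod_cast congrArg (Int.cast : ℤ → ℝ) hk2
    have hT : ecfT x = (a:ℝ) + 1 - 1/x := by
      rw [ecfT, hxi, h2k]; push_cast; ring
    refine ⟨by rw [hT]; linarith, by rw [hT]; linarith, ?_, by omega, Or.inr hxi, ?_⟩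
    · rw [hT]
      have : ((a:ℝ) + 1) - 1/x = ((a + 1 : ℤ) : ℝ) - 1/x := by push_cast; ring
      rw [this]
      exact (irrational_intCast_sub_iff).mpr hinv
    · intro hhalf _
      have h2 : (2:ℝ) ≤ 1/x := by rw [le_div_iff₀ hx0]; linarith
      have ha2 : 2 ≤ a := by rw [ha, Int.le_floor]; exact_mod_cast h2
      omega

private lemma ecfT_half {y : ℝ} (hy : 1/2 < y) (hy1 : y < 1) : ecfT y = 2 - 1/y := by
  have hy0 : 0 < y := by linarith
  have h1 : 1 < 1/y := by rw [lt_div_iff₀ hy0]; linarith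
  have h2 : 1/y < 2 := by rw [div_lt_iff₀ hy0]; linarith
  have hfl : ⌊1/y⌋ = (1:ℤ) := by
    rw [Int.floor_eq_iff]
    constructor
    · exact_mod_cast h1.le
    · push_cast; linarith
  have hxi : ecfXi y = -1 := by rw [ecfXi, hfl]; norm_num
  have hk : ecfK y = 1 := by rw [ecfK, hfl]; rfl
  rw [ecfT, hxi, hk]; push_cast; ring

private lemma iter_dom {x : ℝ} (hx : x ∈ ECFdom) (m : ℕ) :
    0 < ecfT^[m] x ∧ ecfT^[m] x < 1 ∧ Irrational (ecfT^[m] x) := by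
  induction m with
  | zero =>
    obtain ⟨⟨h0, h1⟩, hirr⟩ := hx
    refine ⟨h0, lt_of_le_of_ne h1 ?_, hirr⟩
    intro h
    simp only [Function.iterate_zero, id_eq] at h
    exact hirr.ne_int 1 (by rw [h]; norm_num)
  | succ n ih =>
    obtain ⟨h0, h1, hirr⟩ := ih
    obtain ⟨a, b, c, _⟩ := ecfKey h0 h1 hirr
    rw [Function.iterate_succ_apply']
    exact ⟨a, b, c⟩

private lemma tau_nonempty {x : ℝ} (hx : x ∈ ECFdom) :
    {j : ℕ | ecfT^[j] x ∈ Set.Ioc (0:ℝ) (1/2)}.Nonempty := by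
  by_contra h
  rw [Set.not_nonempty_iff_eq_empty] at h
  have hall : ∀ j, 1/2 < ecfT^[j] x := by
    intro j
    by_contra hle
    push_neg at hle
    have hpos := (iter_dom hx j).1
    have hmem : j ∈ {j : ℕ | ecfT^[j] x ∈ Set.Ioc (0:ℝ) (1/2)} := ⟨hpos, hle⟩
    rw [h] at hmem
    exact hmem
  have key : ∀ j : ℕ, 1/(1 - ecfT^[j] x) = 1/(1 - x) - j := by
    intro j
    induction j with
    | zero => simp
    | succ n ih =>
      set y := ecfT^[n] x with hy
      have h12 : 1/2 < y := hall n
      have hy1 : y < 1 := (iter_dom hx n).2.1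
      have hy0 : 0 < y := by linarith
      have h1y : 0 < 1 - y := by linarith
      have hstep : 1/(1 - ecfT^[n+1] x) = 1/(1 - y) - 1 := by
        rw [Function.iterate_succ_apply', ← hy, ecfT_half h12 hy1]
        have hA : 1 - (2 - 1/y) = (1 - y)/y := by field_simp; ring
        rw [hA, one_div_div]
        have hB : y = 1 - (1 - y) := by ring
        nth_rewrite 1 [hB]
        rw [sub_div, div_self (ne_of_gt h1y)]
      rw [hstep, ih]
      push_cast
      ring
  obtain ⟨N, hN⟩ := exists_nat_ge (1/(1 - x))
  have hlt : ecfT^[N] x < 1 := (iter_dom hx N).2.1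
  have hlt' : 0 < 1 - ecfT^[N] x := by linarith
  have hpos : 0 < 1/(1 - ecfT^[N] x) := by positivity
  rw [key N] at hpos
  linarith

private lemma tau_mem {x : ℝ} (hx : x ∈ ECFdom) :
    ecfT^[ecfTau x] x ∈ Set.Ioc (0:ℝ) (1/2) :=
  Nat.sInf_mem (tau_nonempty hx)

private lemma nu_ge {x : ℝ} : ∀ n, n + 1 ≤ ecfNu x n := by
  intro n
  induction n with
  | zero => simp [ecfNu]
  | succ m ih => simp only [ecfNu]; omega

private lemma nu_add {x : ℝ} (a : ℕ) : ∀ b, ecfNu x a + b ≤ ecfNu x (a + b) := by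
  intro b
  induction b with
  | zero => simp
  | succ m ih =>
    have : a + (m + 1) = (a + m) + 1 := by omega
    rw [this]
    simp only [ecfNu]
    omega

private lemma iterR_eq {x : ℝ} : ∀ n, ecfR^[n] x = ecfT^[ecfNu x n - 1] x := by
  intro n
  induction n with
  | zero => simp [ecfNu]
  | succ m ih =>
    rw [Function.iterate_succ_apply', ecfR]
    set t := ecfTau (ecfR^[m] x) with ht
    rw [ih, ← Function.iterate_add_apply]
    congr 1
    have h1 := nu_ge (x := x) m
    simp only [ecfNu, ← ht]
    omega

private lemma good_digit {x : ℝ} (hx : x ∈ ECFdom) (n : ℕ) (hn : 1 ≤ n) :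
    ecfT^[ecfNu x n - 2] x ∈ Set.Ioc (0:ℝ) (1/2) := by
  obtain ⟨m, rfl⟩ : ∃ m, n = m + 1 := ⟨n - 1, by omega⟩
  have hRm : ecfR^[m] x ∈ ECFdom := by
    rw [iterR_eq]
    obtain ⟨h0, h1, hirr⟩ := iter_dom hx (ecfNu x m - 1)
    exact ⟨⟨h0, h1.le⟩, hirr⟩
  set t := ecfTau (ecfR^[m] x) with ht
  have htau : ecfT^[t] (ecfR^[m] x) ∈ Set.Ioc (0:ℝ) (1/2) := tau_mem hRm
  rw [iterR_eq, ← Function.iterate_add_apply] at htau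
  have hge := nu_ge (x := x) m
  have heq : t + (ecfNu x m - 1) = ecfNu x (m + 1) - 2 := by
    simp only [ecfNu, ← ht]
    omega
  rwa [heq] at htau

private lemma digK_ge_one {x : ℝ} (hx : x ∈ ECFdom) (m : ℕ) : 1 ≤ ecfDigK x m := by
  obtain ⟨h0, h1, hirr⟩ := iter_dom hx (m - 1)
  exact (ecfKey h0 h1 hirr).2.2.2.1

private lemma digXi_pm {x : ℝ} (hx : x ∈ ECFdom) (m : ℕ) :
    ecfDigXi x m = 1 ∨ ecfDigXi x m = -1 := by
  rcases Nat.eq_zero_or_pos m with h | h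
  · left; simp [ecfDigXi, h]
  · obtain ⟨h0, h1, hirr⟩ := iter_dom hx (m - 1)
    have hm : m ≠ 0 := by omega
    have heq : ecfDigXi x m = ecfXi (ecfT^[m-1] x) := by simp [ecfDigXi, hm]
    rw [heq]
    exact (ecfKey h0 h1 hirr).2.2.2.2.1

private lemma q_pos_mono {x : ℝ} (hx : x ∈ ECFdom) :
    ∀ n, 1 ≤ ecfQ x n ∧ ecfQ x n ≤ ecfQ x (n + 1) := by
  intro n
  induction n with
  | zero =>
    have hk := digK_ge_one hx 1
    constructor
    · show (1:ℤ) ≤ 1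
      exact le_refl 1
    · show (1:ℤ) ≤ 2 * (ecfDigK x 1 : ℤ)
      have : (1:ℤ) ≤ (ecfDigK x 1 : ℤ) := by exact_mod_cast hk
      linarith
  | succ m ih =>
    obtain ⟨h1, h2⟩ := ih
    have h1' : 1 ≤ ecfQ x (m + 1) := le_trans h1 h2
    refine ⟨h1', ?_⟩
    have hrec : ecfQ x (m + 2) =
        2 * (ecfDigK x (m+2) : ℤ) * ecfQ x (m+1) + ecfDigXi x (m+1) * ecfQ x m := rfl
    have hk : (1:ℤ) ≤ (ecfDigK x (m+2) : ℤ) := by exact_mod_cast digK_ge_one hx (m+2)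
    rcases digXi_pm hx (m+1) with h | h <;> rw [hrec, h] <;> nlinarith

private lemma q_mono_le {x : ℝ} (hx : x ∈ ECFdom) : Monotone (ecfQ x) :=
  monotone_nat_of_le_succ fun n => (q_pos_mono hx n).2

private lemma main2 {x : ℝ} (hx : x ∈ ECFdom) (n : ℕ) (hn : 2 ≤ n) :
    3 * ecfQ x (ecfNu x n - 2) ≤ ecfQ x (ecfNu x n) := by
  have hν := nu_ge (x := x) n
  obtain ⟨l, hl⟩ : ∃ l, ecfNu x n = l + 3 := ⟨ecfNu x n - 3, by omega⟩
  have hgood := good_digit hx n (by omega)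
  rw [hl] at hgood ⊢
  have hsub : l + 3 - 2 = l + 1 := rfl
  rw [hsub] at hgood ⊢
  obtain ⟨h0, h1, hirr⟩ := iter_dom hx (l + 1)
  have hrec3 : ecfQ x (l + 3) = 2 * (ecfDigK x (l+3) : ℤ) * ecfQ x (l+2)
      + ecfDigXi x (l+2) * ecfQ x (l+1) := rfl
  have hrec2 : ecfQ x (l + 2) = 2 * (ecfDigK x (l+2) : ℤ) * ecfQ x (l+1)
      + ecfDigXi x (l+1) * ecfQ x l := rfl
  have hk3 : (1:ℤ) ≤ (ecfDigK x (l+3) : ℤ) := by exact_mod_cast digK_ge_one hx (l+3)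
  have hk2 : (1:ℤ) ≤ (ecfDigK x (l+2) : ℤ) := by exact_mod_cast digK_ge_one hx (l+2)
  have hq1 := (q_pos_mono hx l).1
  have hq12 := (q_pos_mono hx l).2
  have hq23 := (q_pos_mono hx (l+1)).2
  have hq2 := (q_pos_mono hx (l+1)).1
  have hxi_eq : ecfDigXi x (l+2) = ecfXi (ecfT^[l+1] x) := by simp [ecfDigXi]
  rcases digXi_pm hx (l+2) with hε | hε
  · rw [hrec3, hε]
    nlinarith
  · have h2k : 2 ≤ ecfK (ecfT^[l+1] x) :=
      (ecfKey h0 h1 hirr).2.2.2.2.2 hgood.2 (by rw [← hxi_eq]; exact hε)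
    have hk2' : (2:ℤ) ≤ (ecfDigK x (l+2) : ℤ) := by
      have he : ecfDigK x (l+2) = ecfK (ecfT^[l+1] x) := rfl
      rw [he]; exact_mod_cast h2k
    have hinner : 3 * ecfQ x (l+1) ≤ ecfQ x (l+2) := by
      rw [hrec2]
      rcases digXi_pm hx (l+1) with hδ | hδ <;> rw [hδ] <;>
        nlinarith [mul_nonneg (by linarith : (0:ℤ) ≤ (ecfDigK x (l+2):ℤ) - 2)
          (by linarith : (0:ℤ) ≤ ecfQ x (l+1))]
    rw [hrec3, hε]
    nlinarith [mul_nonneg (by linarith : (0:ℤ) ≤ (ecfDigK x (l+3):ℤ) - 1)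
      (by linarith : (0:ℤ) ≤ ecfQ x (l+2))]

end AuxProof

/-- `q̂_n(x) ≥ 3 q̂_{n-3}(x)` for `n ≥ 4`. -/
theorem ecfQhat_three_step :
    ∀ x ∈ ECFdom, ∀ n : ℕ, 4 ≤ n → 3 * ecfQhat x (n - 3) ≤ ecfQhat x n := by
  intro x hx n hn
  obtain ⟨m, rfl⟩ : ∃ m, n = m + 4 := ⟨n - 4, by omega⟩
  have h3 : m + 4 - 3 = m + 1 := rfl
  rw [h3]
  have e1 : ecfQhat x (m+1) = ecfQ x (ecfNu x (m+1)) := by simp [ecfQhat]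
  have e2 : ecfQhat x (m+4) = ecfQ x (ecfNu x (m+4)) := by simp [ecfQhat]
  rw [e1, e2]
  have hmain := main2 hx (m+4) (by omega)
  have hmono := q_mono_le hx
  have h12 : ecfNu x (m+1) + 1 ≤ ecfNu x (m+2) := nu_add (m+1) 1
  have h2n : ecfNu x (m+2) + 2 ≤ ecfNu x (m+4) := nu_add (m+2) 2
  have hA : ecfQ x (ecfNu x (m+1)) ≤ ecfQ x (ecfNu x (m+2)) := hmono (by omega)
  have hB : ecfQ x (ecfNu x (m+2)) ≤ ecfQ x (ecfNu x (m+4) - 2) := hmono (by omega)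
  linarith
end
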